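/- arXiv:2307.04093 — 6 statements merged into one kernel-verified Lean document; each statement's English description precedes it below -/
import Mathlib

section
/- Let G be an n-vertex graph and IsEdge_G : {0,1}^n → {0,1} the edge-indicator function. Any root-to-leaf path in a decision tree computing IsEdge_G that is followed by the all-zeros input must query a set of variables whose corresponding vertices form a vertex cover of G. -/
open Classical

inductive DTree (α : Type) : Type where
  | leaf (b : Bool) : DTree α
  | node (i : α) (l r : DTree α) : DTree α

def DTree.eval {α : Type} : DTree α → (α → Bool) → Bool
  | .leaf b, _ => b
  | .node i l r, x => if x i then r.eval x else l.eval x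

/-- The root-to-leaf path followed by input `x`, as a list of (variable, value) literals. -/
def DTree.pathOf {α : Type} : DTree α → (α → Bool) → List (α × Bool)
  | .leaf _, _ => []
  | .node i l r, x => (i, x i) :: (if x i then r.pathOf x else l.pathOf x)

/-- The edge-indicator function of G: outputs 1 iff the input is the indicator string
of some edge of G. -/
noncomputable def isEdge {n : ℕ} (G : SimpleGraph (Fin n)) (x : Fin n → Bool) : Bool :=
  decide (∃ e ∈ G.edgeSet, x = fun i => decide (i ∈ e))

lemma eval_eq_of_agree {α : Type} (T : DTree α) (x y : α → Bool)
    (h : ∀ p ∈ T.pathOf y, x p.1 = y p.1) : T.eval x = T.eval y := by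
  induction T with
  | leaf b => rfl
  | node i l r ihl ihr =>
    have hi : x i = y i := h (i, y i) (by simp [DTree.pathOf])
    by_cases hyi : y i
    · have hxi : x i = true := by rw [hi, hyi]
      simp only [DTree.eval, hxi, hyi, if_true]
      exact ihr fun p hp => h p (by simp [DTree.pathOf, hyi, hp])
    · simp only [Bool.not_eq_true] at hyi
      have hxi : x i = false := by rw [hi, hyi]
      simp only [DTree.eval, hxi, hyi, if_false]
      exact ihl fun p hp => h p (by simp [DTree.pathOf, hyi, hp])

/-- in any decision tree computing IsEdge_G, the variables queried along the
path followed by the all-zeros input form a vertex cover of G. -/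
theorem stmt8 {n : ℕ} (G : SimpleGraph (Fin n)) (T : DTree (Fin n))
    (hT : ∀ x, T.eval x = isEdge G x) :
    ∀ ⦃u v : Fin n⦄, G.Adj u v →
      (∃ p ∈ T.pathOf (fun _ => false), p.1 = u) ∨
      (∃ p ∈ T.pathOf (fun _ => false), p.1 = v) := by
  intro u v huv
  by_contra hcon
  push_neg at hcon
  obtain ⟨hu, hv⟩ := hcon
  set x : Fin n → Bool := fun i => decide (i ∈ (s(u, v) : Sym2 (Fin n))) with hx
  have hxtrue : isEdge G x = true := by
    rw [isEdge, decide_eq_true_eq]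
    exact ⟨s(u, v), G.mem_edgeSet.mpr huv, rfl⟩
  have hzfalse : isEdge G (fun _ => false) = false := by
    rw [isEdge, decide_eq_false_iff_not]
    rintro ⟨e, he, heq⟩
    induction e using Sym2.ind with
    | _ a b =>
      have := congrFun heq a
      simp at this
  have hagree : ∀ p ∈ T.pathOf (fun _ => false), x p.1 = false := by
    intro p hp
    have h1 := hu p hp
    have h2 := hv p hp
    simp [hx, Sym2.mem_iff, h1, h2]
  have := eval_eq_of_agree T x (fun _ => false) hagree
  rw [hT, hT, hxtrue, hzfalse] at this
  exact absurd this (by simp)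
end

section
/- If a graph G with n vertices and m edges has a vertex cover of size at most k, then there exists a decision tree computing IsEdge_G of size at most k + m + mn. -/
set_option linter.unusedSectionVars false


open Classical

def DTree.size {α : Type} : DTree α → ℕ
  | .leaf _ => 0
  | .node _ l r => 1 + l.size + r.size

namespace Stmt9Aux

variable {n : ℕ}

/-- chain checking that all coordinates in `l` are zero; accepts if so. -/
def zchain (l : List (Fin n)) : DTree (Fin n) :=
  l.foldr (fun i t => DTree.node i t (DTree.leaf false)) (DTree.leaf true)

lemma zchain_eval (l : List (Fin n)) (x : Fin n → Bool) :
    (zchain l).eval x = true ↔ ∀ i ∈ l, x i = false := by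
  induction l with
  | nil => simp [zchain, DTree.eval]
  | cons a l ih =>
    show (DTree.node a (zchain l) (DTree.leaf false)).eval x = true ↔ _
    rw [DTree.eval]
    by_cases h : x a = true
    · rw [if_pos h]
      simp only [DTree.eval]
      constructor
      · intro h'; simp at h'
      · intro h'; rw [h' a (List.mem_cons_self (a := a) (l := l))] at h; simp at h
    · rw [if_neg h, ih]
      have hx : x a = false := by simpa using h
      constructor
      · intro h' i hi
        rcases List.mem_cons.mp hi with rfl | hi'
        · exact hx
        · exact h' i hi'
      · intro h' i hi; exact h' i (List.mem_cons_of_mem _ hi)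

lemma zchain_size (l : List (Fin n)) : (zchain l).size = l.length := by
  induction l with
  | nil => rfl
  | cons a l ih =>
    show (DTree.node a (zchain l) (DTree.leaf false)).size = l.length + 1
    rw [DTree.size, ih]
    simp [DTree.size]
    omega

/-- chain over candidate other endpoints `ws` of an edge containing `v`. -/
noncomputable def nchain (v : Fin n) (ws : List (Fin n)) : DTree (Fin n) :=
  ws.foldr
    (fun w t => DTree.node w t (zchain ((Finset.univ.erase v).erase w).toList))
    (DTree.leaf false)

lemma nchain_eval (v : Fin n) (ws : List (Fin n)) (hv : v ∉ ws) (x : Fin n → Bool) :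
    (nchain v ws).eval x = true ↔
      ∃ w ∈ ws, x w = true ∧ ∀ i, i ≠ v → i ≠ w → x i = false := by
  induction ws with
  | nil => simp [nchain, DTree.eval]
  | cons a ws ih =>
    have hva : v ≠ a := fun h => hv (h ▸ List.mem_cons_self (a := a) (l := ws))
    have hv' : v ∉ ws := fun h => hv (List.mem_cons_of_mem _ h)
    show (DTree.node a (nchain v ws)
        (zchain ((Finset.univ.erase v).erase a).toList)).eval x = true ↔ _
    rw [DTree.eval]
    by_cases h : x a = true
    · rw [if_pos h, zchain_eval]
      constructor
      · intro hz
        refine ⟨a, List.mem_cons_self (a := a) (l := ws), h, fun i h1 h2 => ?_⟩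
        exact hz i (by simp [Finset.mem_erase, h1, h2])
      · rintro ⟨w, hw, hxw, hall⟩
        intro i hi
        simp only [Finset.mem_toList, Finset.mem_erase, Finset.mem_univ, and_true] at hi
        by_cases hwa : w = a
        · subst hwa; exact hall i hi.2 hi.1
        · rw [hall a hva.symm (Ne.symm hwa)] at h; simp at h
    · rw [if_neg h, ih hv']
      constructor
      · rintro ⟨w, hw, rest⟩; exact ⟨w, List.mem_cons_of_mem _ hw, rest⟩
      · rintro ⟨w, hw, hxw, hall⟩
        rcases List.mem_cons.mp hw with rfl | hw'
        · exact absurd hxw h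
        · exact ⟨w, hw', hxw, hall⟩

lemma nchain_size (v : Fin n) (ws : List (Fin n)) :
    (nchain v ws).size ≤ ws.length * (1 + n) := by
  induction ws with
  | nil => simp [nchain, DTree.size]
  | cons a ws ih =>
    have hz : (zchain ((Finset.univ.erase v).erase a).toList).size ≤ n := by
      rw [zchain_size, Finset.length_toList]
      calc ((Finset.univ.erase v).erase a).card
          ≤ (Finset.univ.erase v).card := Finset.card_erase_le
        _ ≤ (Finset.univ : Finset (Fin n)).card := Finset.card_erase_le
        _ = n := by simp
    show (DTree.node a (nchain v ws)
        (zchain ((Finset.univ.erase v).erase a).toList)).size ≤ _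
    rw [DTree.size]
    have : (ws.length + 1) * (1 + n) = ws.length * (1 + n) + (1 + n) := by ring
    simp only [List.length_cons]
    omega

variable (G : SimpleGraph (Fin n)) [DecidableRel G.Adj]

/-- candidate other endpoints for edges containing `v`, excluding already-handled vertices. -/
noncomputable def nlist (v : Fin n) (pre : List (Fin n)) : List (Fin n) :=
  ((G.neighborFinset v).filter (fun w => w ∉ pre)).toList

/-- main tree: chain through cover vertices `cs`; `pre` = already-queried (zero) vertices. -/
noncomputable def mtree : List (Fin n) → List (Fin n) → DTree (Fin n)
  | [], _ => DTree.leaf false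
  | v :: rest, pre =>
      DTree.node v (mtree rest (pre ++ [v])) (nchain v (nlist G v pre))

def Pgood (x : Fin n → Bool) : Prop :=
  ∃ u w, G.Adj u w ∧ x u = true ∧ x w = true ∧ ∀ i, i ≠ u → i ≠ w → x i = false

lemma isEdge_true_iff (x : Fin n → Bool) :
    isEdge G x = true ↔ Pgood G x := by
  simp only [isEdge, decide_eq_true_eq]
  constructor
  · rintro ⟨e, he, hx⟩
    revert he hx
    induction e using Sym2.ind with
    | _ u w =>
      intro he hx
      rw [SimpleGraph.mem_edgeSet] at he
      refine ⟨u, w, he, ?_, ?_, ?_⟩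
      · rw [hx]; simp [Sym2.mem_iff]
      · rw [hx]; simp [Sym2.mem_iff]
      · intro i h1 h2; rw [hx]; simp [Sym2.mem_iff, h1, h2]
  · rintro ⟨u, w, h, hu, hw, hall⟩
    refine ⟨s(u, w), (G.mem_edgeSet).mpr h, ?_⟩
    funext i
    by_cases h1 : i = u
    · subst h1; simp [Sym2.mem_iff, hu]
    · by_cases h2 : i = w
      · subst h2; simp [Sym2.mem_iff, hw]
      · simp [Sym2.mem_iff, h1, h2, hall i h1 h2]

lemma mtree_eval (cs : List (Fin n)) (x : Fin n → Bool) :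
    ∀ pre, (∀ u ∈ pre, x u = false) →
    (∀ ⦃u w : Fin n⦄, G.Adj u w → (u ∈ pre ∨ u ∈ cs) ∨ (w ∈ pre ∨ w ∈ cs)) →
    ((mtree G cs pre).eval x = true ↔ Pgood G x) := by
  induction cs with
  | nil =>
    intro pre hpre hcov
    have hev : (mtree G [] pre).eval x = false := rfl
    rw [hev]
    simp only [Bool.false_eq_true, false_iff]
    rintro ⟨u, w, hadj, hu, hw, -⟩
    rcases hcov hadj with (h | h) | (h | h)
    · rw [hpre u h] at hu; simp at hu
    · simp at h
    · rw [hpre w h] at hw; simp at hw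
    · simp at h
  | cons v rest ih =>
    intro pre hpre hcov
    have hvn : v ∉ nlist G v pre := by
      intro hmem
      rw [nlist, Finset.mem_toList, Finset.mem_filter, SimpleGraph.mem_neighborFinset] at hmem
      exact G.loopless.irrefl v hmem.1
    show (DTree.node v (mtree G rest (pre ++ [v]))
        (nchain v (nlist G v pre))).eval x = true ↔ _
    rw [DTree.eval]
    by_cases hx : x v = true
    · rw [if_pos hx, nchain_eval v _ hvn]
      constructor
      · rintro ⟨w, hw, hxw, hall⟩
        rw [nlist, Finset.mem_toList, Finset.mem_filter,
          SimpleGraph.mem_neighborFinset] at hw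
        exact ⟨v, w, hw.1, hx, hxw, hall⟩
      · rintro ⟨u, w, hadj, hu, hw, hall⟩
        by_cases h1 : v = u
        · subst h1
          refine ⟨w, ?_, hw, hall⟩
          rw [nlist, Finset.mem_toList, Finset.mem_filter, SimpleGraph.mem_neighborFinset]
          refine ⟨hadj, fun hmem => ?_⟩
          rw [hpre w hmem] at hw; simp at hw
        · by_cases h2 : v = w
          · subst h2
            refine ⟨u, ?_, hu, fun i hi1 hi2 => hall i hi2 hi1⟩
            rw [nlist, Finset.mem_toList, Finset.mem_filter, SimpleGraph.mem_neighborFinset]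
            refine ⟨hadj.symm, fun hmem => ?_⟩
            rw [hpre u hmem] at hu; simp at hu
          · rw [hall v h1 h2] at hx; simp at hx
    · rw [if_neg hx]
      have hx' : x v = false := by simpa using hx
      apply ih (pre ++ [v])
      · intro u hu
        rcases List.mem_append.mp hu with h | h
        · exact hpre u h
        · simp at h; subst h; exact hx'
      · intro u w hadj
        rcases hcov hadj with (h | h) | (h | h)
        · exact Or.inl (Or.inl (List.mem_append_left _ h))
        · rcases List.mem_cons.mp h with rfl | h'
          · exact Or.inl (Or.inl (List.mem_append_right _ (by simp)))
          · exact Or.inl (Or.inr h')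
        · exact Or.inr (Or.inl (List.mem_append_left _ h))
        · rcases List.mem_cons.mp h with rfl | h'
          · exact Or.inr (Or.inl (List.mem_append_right _ (by simp)))
          · exact Or.inr (Or.inr h')

/-- the set of edges not yet killed by the prefix. -/
noncomputable def rem (pre : List (Fin n)) : Finset (Sym2 (Fin n)) :=
  G.edgeFinset.filter (fun e => ∀ u ∈ pre, u ∉ e)

lemma key (v : Fin n) (pre : List (Fin n)) (hv : v ∉ pre) :
    (nlist G v pre).length + (rem G (pre ++ [v])).card ≤ (rem G pre).card := by
  set s := (G.neighborFinset v).filter (fun w => w ∉ pre) with hs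
  have hlen : (nlist G v pre).length = s.card := by
    rw [nlist, Finset.length_toList]
  set A := s.image (fun w => s(v, w)) with hA
  have hcardA : A.card = s.card := by
    apply Finset.card_image_of_injOn
    intro a ha b hb hab
    have ha' : G.Adj v a := (G.mem_neighborFinset v a).mp (Finset.mem_filter.mp ha).1
    rcases Sym2.eq_iff.mp hab with ⟨_, h⟩ | ⟨h1, h2⟩
    · exact h
    · exact absurd h2.symm ha'.ne
  have hAsub : A ⊆ rem G pre := by
    intro e he
    obtain ⟨w, hw, rfl⟩ := Finset.mem_image.mp he
    obtain ⟨hw1, hw2⟩ := Finset.mem_filter.mp hw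
    have hadj : G.Adj v w := (G.mem_neighborFinset v w).mp hw1
    rw [rem, Finset.mem_filter]
    refine ⟨SimpleGraph.mem_edgeFinset.mpr hadj, ?_⟩
    intro u hu hmem
    rcases Sym2.mem_iff.mp hmem with rfl | rfl
    · exact hv hu
    · exact hw2 hu
  have hBsub : rem G (pre ++ [v]) ⊆ rem G pre := by
    intro e he
    rw [rem, Finset.mem_filter] at he ⊢
    exact ⟨he.1, fun u hu => he.2 u (List.mem_append_left _ hu)⟩
  have hdisj : Disjoint A (rem G (pre ++ [v])) := by
    rw [Finset.disjoint_left]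
    intro e heA heB
    obtain ⟨w, hw, rfl⟩ := Finset.mem_image.mp heA
    rw [rem, Finset.mem_filter] at heB
    exact heB.2 v (List.mem_append_right _ (by simp)) (by simp [Sym2.mem_iff])
  calc (nlist G v pre).length + (rem G (pre ++ [v])).card
      = A.card + (rem G (pre ++ [v])).card := by rw [hlen, hcardA]
    _ = (A ∪ rem G (pre ++ [v])).card := (Finset.card_union_of_disjoint hdisj).symm
    _ ≤ (rem G pre).card := Finset.card_le_card (Finset.union_subset hAsub hBsub)

lemma mtree_size (cs : List (Fin n)) :
    ∀ pre, (∀ u ∈ cs, u ∉ pre) → cs.Nodup →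
    (mtree G cs pre).size ≤ cs.length + (rem G pre).card * (1 + n) := by
  induction cs with
  | nil => intro pre _ _; simp [mtree, DTree.size]
  | cons v rest ih =>
    intro pre hdisj hnd
    have hvpre : v ∉ pre := hdisj v (List.mem_cons_self (a := v) (l := rest))
    have hdisj' : ∀ u ∈ rest, u ∉ pre ++ [v] := by
      intro u hu hmem
      rcases List.mem_append.mp hmem with h | h
      · exact hdisj u (List.mem_cons_of_mem _ hu) h
      · simp at h; subst h; exact (List.nodup_cons.mp hnd).1 hu
    have h1 := ih (pre ++ [v]) hdisj' (List.nodup_cons.mp hnd).2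
    have h2 := nchain_size v (nlist G v pre)
    have h3 := key G v pre hvpre
    show (DTree.node v (mtree G rest (pre ++ [v])) (nchain v (nlist G v pre))).size ≤ _
    rw [DTree.size]
    have h4 : (nlist G v pre).length * (1 + n) + (rem G (pre ++ [v])).card * (1 + n)
        ≤ (rem G pre).card * (1 + n) := by
      rw [← Nat.add_mul]; exact Nat.mul_le_mul_right _ h3
    simp only [List.length_cons]
    omega

end Stmt9Aux

/-- if G (n vertices, m edges) has a vertex cover of size at most k, then there
is a decision tree computing IsEdge_G of size at most k + m + mn. -/
theorem stmt9 {n : ℕ} (G : SimpleGraph (Fin n)) [DecidableRel G.Adj] (k : ℕ)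
    (C : Finset (Fin n)) (hC : ∀ ⦃u v : Fin n⦄, G.Adj u v → u ∈ C ∨ v ∈ C)
    (hCk : C.card ≤ k) :
    ∃ T : DTree (Fin n), (∀ x, T.eval x = isEdge G x) ∧
      T.size ≤ k + G.edgeFinset.card + G.edgeFinset.card * n := by
  classical
  refine ⟨Stmt9Aux.mtree G C.toList [], ?_, ?_⟩
  · intro x
    have h1 := Stmt9Aux.mtree_eval G C.toList x [] (by simp)
      (by
        intro u w hadj
        rcases hC hadj with h | h
        · exact Or.inl (Or.inr (Finset.mem_toList.mpr h))
        · exact Or.inr (Or.inr (Finset.mem_toList.mpr h)))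
    have h2 := Stmt9Aux.isEdge_true_iff G x
    have h3 : ((Stmt9Aux.mtree G C.toList []).eval x = true) ↔ (isEdge G x = true) :=
      h1.trans h2.symm
    cases hA : (Stmt9Aux.mtree G C.toList []).eval x <;>
      cases hB : isEdge G x <;> simp_all
  · have h := Stmt9Aux.mtree_size G C.toList [] (by simp) C.nodup_toList
    have hrem : Stmt9Aux.rem G ([] : List (Fin n)) = G.edgeFinset := by
      rw [Stmt9Aux.rem]
      apply Finset.filter_true_of_mem
      intro e _ u hu
      simp at hu
    rw [hrem] at h
    have hlen : C.toList.length = C.card := Finset.length_toList C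
    calc (Stmt9Aux.mtree G C.toList []).size
        ≤ C.toList.length + G.edgeFinset.card * (1 + n) := h
      _ = C.card + (G.edgeFinset.card + G.edgeFinset.card * n) := by
          rw [hlen, Nat.mul_add, Nat.mul_one]
      _ ≤ k + G.edgeFinset.card + G.edgeFinset.card * n := by omega
end

section
/- If every vertex cover of a graph G with n vertices and m edges has size at least k', then every decision tree computing IsEdge_G has size at least k' + m. -/
open Classical

lemma DTree.eval_node_false {α : Type} {i : α} {l r : DTree α} {x : α → Bool}
    (h : x i = false) : (DTree.node i l r).eval x = l.eval x := by
  show (if x i then r.eval x else l.eval x) = l.eval x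
  rw [h]; rfl

lemma DTree.eval_node_true {α : Type} {i : α} {l r : DTree α} {x : α → Bool}
    (h : x i = true) : (DTree.node i l r).eval x = r.eval x := by
  show (if x i then r.eval x else l.eval x) = r.eval x
  rw [h]; rfl

/-- Lemma A: a tree computing "x = base with exactly one free coordinate (in N) flipped to true"
on all inputs compatible with ρ has size at least |N|. -/
lemma lemA {n : ℕ} (T : DTree (Fin n)) :
    ∀ (ρ : Fin n → Option Bool) (base : Fin n → Bool) (N : Finset (Fin n)),
    (∀ i, ρ i = none → base i = false) →
    (∀ v ∈ N, ρ v = none) →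
    (∀ x, (∀ i b, ρ i = some b → x i = b) →
      T.eval x = decide (∃ v ∈ N, x = Function.update base v true)) →
    (∀ i b, ρ i = some b → base i = b) →
    N.card ≤ T.size := by
  induction T with
  | leaf b =>
    intro ρ base N hfree hN hT hcomp
    rcases Finset.eq_empty_or_nonempty N with h | ⟨v, hv⟩
    · simp [h]
    exfalso
    have hvfree : ρ v = none := hN v hv
    have h1 : DTree.eval (.leaf b) (Function.update base v true) = true := by
      rw [hT]
      · simp only [decide_eq_true_eq]
        exact ⟨v, hv, rfl⟩
      · intro i bi hi
        have hiv : i ≠ v := by rintro rfl; rw [hvfree] at hi; cases hi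
        rw [Function.update_of_ne hiv]
        exact hcomp i bi hi
    have h2 : DTree.eval (.leaf b) base = false := by
      rw [hT base hcomp]
      simp only [decide_eq_false_iff_not]
      rintro ⟨w, hw, hbw⟩
      have : base w = true := by
        conv_lhs => rw [hbw]
        simp
      rw [hfree w (hN w hw)] at this
      exact Bool.noConfusion this
    simp only [DTree.eval] at h1 h2
    rw [h1] at h2; exact Bool.noConfusion h2
  | node i l r ihl ihr =>
    intro ρ base N hfree hN hT hcomp
    have hsize : DTree.size (.node i l r) = 1 + l.size + r.size := rfl
    cases hρi : ρ i with
    | some bI =>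
      cases bI with
      | false =>
        have : N.card ≤ l.size := by
          refine ihl ρ base N hfree hN ?_ hcomp
          intro x hx
          rw [← DTree.eval_node_false (l := l) (r := r) (hx i false hρi)]
          exact hT x hx
        omega
      | true =>
        have : N.card ≤ r.size := by
          refine ihr ρ base N hfree hN ?_ hcomp
          intro x hx
          rw [← DTree.eval_node_true (l := l) (r := r) (hx i true hρi)]
          exact hT x hx
        omega
    | none =>
      set ρ' := Function.update ρ i (some false) with hρ'def
      have hρ'eq : ∀ j, j ≠ i → ρ' j = ρ j := fun j hj => Function.update_of_ne hj _ _
      have hρ'i : ρ' i = some false := Function.update_self _ _ _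
      have hcomp' : ∀ j b, ρ' j = some b → base j = b := by
        intro j b hj
        by_cases hji : j = i
        · subst hji; rw [hρ'i] at hj
          cases hj
          exact hfree j hρi
        · exact hcomp j b (by rwa [hρ'eq j hji] at hj)
      have hfree' : ∀ j, ρ' j = none → base j = false := by
        intro j hj
        by_cases hji : j = i
        · subst hji; rw [hρ'i] at hj; cases hj
        · exact hfree j (by rwa [hρ'eq j hji] at hj)
      have hcompmono : ∀ x : Fin n → Bool, (∀ j b, ρ' j = some b → x j = b) →
          (∀ j b, ρ j = some b → x j = b) ∧ x i = false := by
        intro x hx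
        constructor
        · intro j b hj
          have hji : j ≠ i := by rintro rfl; rw [hρi] at hj; cases hj
          exact hx j b (by rwa [hρ'eq j hji])
        · exact hx i false hρ'i
      by_cases hiN : i ∈ N
      · have hl : (N.erase i).card ≤ l.size := by
          refine ihl ρ' base (N.erase i) hfree' ?_ ?_ hcomp'
          · intro v hv
            have hvi : v ≠ i := Finset.ne_of_mem_erase hv
            rw [hρ'eq v hvi]
            exact hN v (Finset.mem_of_mem_erase hv)
          · intro x hx
            obtain ⟨hxρ, hxi⟩ := hcompmono x hx
            have heq : l.eval x = decide (∃ v ∈ N, x = Function.update base v true) := by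
              rw [← DTree.eval_node_false (l := l) (r := r) hxi]
              exact hT x hxρ
            rw [heq, decide_eq_decide]
            constructor
            · rintro ⟨v, hv, rfl⟩
              refine ⟨v, Finset.mem_erase.mpr ⟨?_, hv⟩, rfl⟩
              rintro rfl
              simp [Function.update_self] at hxi
            · rintro ⟨v, hv, rfl⟩
              exact ⟨v, Finset.mem_of_mem_erase hv, rfl⟩
        have hcard : (N.erase i).card = N.card - 1 := Finset.card_erase_of_mem hiN
        have hpos : 1 ≤ N.card := Finset.card_pos.mpr ⟨i, hiN⟩
        omega
      · have hl : N.card ≤ l.size := by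
          refine ihl ρ' base N hfree' ?_ ?_ hcomp'
          · intro v hv
            have hvi : v ≠ i := by rintro rfl; exact hiN hv
            rw [hρ'eq v hvi]
            exact hN v hv
          · intro x hx
            obtain ⟨hxρ, hxi⟩ := hcompmono x hx
            rw [← DTree.eval_node_false (l := l) (r := r) hxi]
            exact hT x hxρ
        omega

/-- Lemma B: main induction. -/
lemma lemB {n : ℕ} (G : SimpleGraph (Fin n)) [DecidableRel G.Adj] (T : DTree (Fin n)) :
    ∀ (ρ : Fin n → Option Bool), (∀ i, ρ i ≠ some true) →
    ∀ k : ℕ,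
    (∀ C : Finset (Fin n),
      (∀ e ∈ G.edgeFinset, (∀ i, ρ i = some false → i ∉ e) → ∃ i ∈ C, i ∈ e) → k ≤ C.card) →
    (∀ x, (∀ i b, ρ i = some b → x i = b) → T.eval x = isEdge G x) →
    k + (G.edgeFinset.filter (fun e => ∀ i, ρ i = some false → i ∉ e)).card ≤ T.size := by
  induction T with
  | leaf b =>
    intro ρ hρ k hk hT
    set F := G.edgeFinset.filter (fun e => ∀ i, ρ i = some false → i ∉ e) with hF
    have hFempty : F = ∅ := by
      rcases Finset.eq_empty_or_nonempty F with h | ⟨e, he⟩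
      · exact h
      exfalso
      rw [hF, Finset.mem_filter] at he
      obtain ⟨heE, hav⟩ := he
      have heS : e ∈ G.edgeSet := SimpleGraph.mem_edgeFinset.mp heE
      have hcomp1 : ∀ i bi, ρ i = some bi → (fun j => decide (j ∈ e)) i = bi := by
        intro i bi hi
        cases bi with
        | true => exact absurd hi (hρ i)
        | false => simp only [decide_eq_false_iff_not]; exact hav i hi
      have h1 : b = true := by
        have h := hT _ hcomp1
        simp only [DTree.eval] at h
        rw [h, isEdge]
        simp only [decide_eq_true_eq]
        exact ⟨e, heS, rfl⟩
      have hcomp0 : ∀ i bi, ρ i = some bi → (fun _ : Fin n => false) i = bi := by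
        intro i bi hi
        cases bi with
        | true => exact absurd hi (hρ i)
        | false => rfl
      have h0 : b = false := by
        have h := hT _ hcomp0
        simp only [DTree.eval] at h
        rw [h, isEdge]
        simp only [decide_eq_false_iff_not]
        rintro ⟨e', he', hx⟩
        induction e' using Sym2.ind with
        | _ u v =>
          have : (fun _ : Fin n => false) u = decide (u ∈ s(u, v)) := congrFun hx u
          simp at this
      rw [h1] at h0; exact Bool.noConfusion h0
    have hk0 : k ≤ 0 := by
      have h := hk ∅ ?_
      · simpa using h
      · intro e heE hav
        exfalso
        have : e ∈ F := by rw [hF, Finset.mem_filter]; exact ⟨heE, hav⟩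
        rw [hFempty] at this
        exact absurd this (Finset.notMem_empty e)
    rw [hFempty]
    simp only [Finset.card_empty, DTree.size]
    omega
  | node i l r ihl ihr =>
    intro ρ hρ k hk hT
    have hsize : DTree.size (.node i l r) = 1 + l.size + r.size := rfl
    cases hρi : ρ i with
    | some bI =>
      cases bI with
      | true => exact absurd hρi (hρ i)
      | false =>
        have h := ihl ρ hρ k hk ?_
        · omega
        · intro x hx
          rw [← DTree.eval_node_false (l := l) (r := r) (hx i false hρi)]
          exact hT x hx
    | none =>
      set ρ' := Function.update ρ i (some false) with hρ'def
      have hρ'eq : ∀ j, j ≠ i → ρ' j = ρ j := fun j hj => Function.update_of_ne hj _ _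
      have hρ'i : ρ' i = some false := Function.update_self _ _ _
      have hρ' : ∀ j, ρ' j ≠ some true := by
        intro j hj
        by_cases hji : j = i
        · subst hji; rw [hρ'i] at hj; simp at hj
        · rw [hρ'eq j hji] at hj; exact hρ j hj
      set F := G.edgeFinset.filter (fun e => ∀ j, ρ j = some false → j ∉ e) with hF
      set F' := G.edgeFinset.filter (fun e => ∀ j, ρ' j = some false → j ∉ e) with hF'
      set N := (G.neighborFinset i).filter (fun v => ρ v = none) with hNdef
      have hF'eq : F' = F.filter (fun e => ¬ i ∈ e) := by
        ext e
        simp only [hF, hF', Finset.mem_filter]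
        constructor
        · rintro ⟨heE, hav⟩
          refine ⟨⟨heE, fun j hj => hav j ?_⟩, hav i hρ'i⟩
          have hji : j ≠ i := by rintro rfl; rw [hρi] at hj; cases hj
          rw [hρ'eq j hji]; exact hj
        · rintro ⟨⟨heE, hav⟩, hie⟩
          refine ⟨heE, fun j hj => ?_⟩
          by_cases hji : j = i
          · subst hji; exact hie
          · exact hav j (by rwa [hρ'eq j hji] at hj)
      have hNcard : (F.filter (fun e => i ∈ e)).card = N.card := by
        symm
        apply Finset.card_bij (fun v _ => s(i, v))
        · intro v hv
          rw [hNdef, Finset.mem_filter, SimpleGraph.mem_neighborFinset] at hv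
          obtain ⟨hadj, hvfree⟩ := hv
          rw [Finset.mem_filter]
          refine ⟨?_, Sym2.mem_mk_left i v⟩
          rw [hF, Finset.mem_filter]
          refine ⟨SimpleGraph.mem_edgeFinset.mpr hadj, ?_⟩
          intro j hj hje
          rw [Sym2.mem_iff] at hje
          rcases hje with rfl | rfl
          · rw [hρi] at hj; cases hj
          · rw [hvfree] at hj; cases hj
        · intro v hv w hw hvw
          exact Sym2.congr_right.mp hvw
        · intro e he
          rw [Finset.mem_filter] at he
          obtain ⟨heF, hie⟩ := he
          rw [hF, Finset.mem_filter] at heF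
          obtain ⟨heE, hav⟩ := heF
          have heS : e ∈ G.edgeSet := SimpleGraph.mem_edgeFinset.mp heE
          induction e using Sym2.ind with
          | _ u v =>
            rw [Sym2.mem_iff] at hie
            have hadj : G.Adj u v := (SimpleGraph.mem_edgeSet G).mp heS
            rcases hie with rfl | rfl
            · refine ⟨v, ?_, rfl⟩
              rw [hNdef, Finset.mem_filter, SimpleGraph.mem_neighborFinset]
              refine ⟨hadj, ?_⟩
              cases hv : ρ v with
              | none => rfl
              | some bv =>
                cases bv with
                | true => exact absurd hv (hρ v)
                | false => exact absurd (Sym2.mem_mk_right i v) (hav v hv)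
            · refine ⟨u, ?_, Sym2.eq_swap⟩
              rw [hNdef, Finset.mem_filter, SimpleGraph.mem_neighborFinset]
              refine ⟨hadj.symm, ?_⟩
              cases hu : ρ u with
              | none => rfl
              | some bu =>
                cases bu with
                | true => exact absurd hu (hρ u)
                | false => exact absurd (Sym2.mem_mk_left u i) (hav u hu)
      have hFsplit : F'.card + N.card = F.card := by
        rw [hF'eq, ← hNcard]
        have h := Finset.card_filter_add_card_filter_not
          (s := F) (p := fun e => i ∈ e)
        omega
      have hl : (k - 1) + F'.card ≤ l.size := by
        refine ihl ρ' hρ' (k - 1) ?_ ?_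
        · intro C hC
          have hcov : ∀ e ∈ G.edgeFinset, (∀ j, ρ j = some false → j ∉ e) →
              ∃ j ∈ insert i C, j ∈ e := by
            intro e heE hav
            by_cases hie : i ∈ e
            · exact ⟨i, Finset.mem_insert_self i C, hie⟩
            · have hcond : ∀ j, ρ' j = some false → j ∉ e := by
                intro j hj
                by_cases hji : j = i
                · subst hji; exact hie
                · exact hav j (by rwa [hρ'eq j hji] at hj)
              obtain ⟨j, hjC, hje⟩ := hC e heE hcond
              exact ⟨j, Finset.mem_insert_of_mem hjC, hje⟩
          have h := hk (insert i C) hcov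
          have hcard := Finset.card_insert_le i C
          omega
        · intro x hx
          have hxρ : ∀ j b, ρ j = some b → x j = b := by
            intro j b hj
            have hji : j ≠ i := by rintro rfl; rw [hρi] at hj; cases hj
            exact hx j b (by rwa [hρ'eq j hji])
          rw [← DTree.eval_node_false (l := l) (r := r) (hx i false hρ'i)]
          exact hT x hxρ
      have hr : N.card ≤ r.size := by
        set ρ'' := Function.update ρ i (some true) with hρ''def
        have hρ''eq : ∀ j, j ≠ i → ρ'' j = ρ j := fun j hj => Function.update_of_ne hj _ _
        have hρ''i : ρ'' i = some true := Function.update_self _ _ _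
        refine lemA r ρ'' (fun j => decide (j = i)) N ?_ ?_ ?_ ?_
        · intro j hj
          have hji : j ≠ i := by
            rintro rfl; rw [hρ''i] at hj; cases hj
          simp [hji]
        · intro v hv
          rw [hNdef, Finset.mem_filter] at hv
          have hvfree := hv.2
          have hvi : v ≠ i := ((SimpleGraph.mem_neighborFinset G i v).mp hv.1).ne'
          rw [hρ''eq v hvi]; exact hvfree
        · intro x hx
          have hxρ : ∀ j b, ρ j = some b → x j = b := by
            intro j b hj
            have hji : j ≠ i := by rintro rfl; rw [hρi] at hj; cases hj
            exact hx j b (by rwa [hρ''eq j hji])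
          have hxi : x i = true := hx i true hρ''i
          have heval : r.eval x = isEdge G x := by
            rw [← DTree.eval_node_true (l := l) (r := r) hxi]
            exact hT x hxρ
          rw [heval, isEdge, decide_eq_decide]
          constructor
          · rintro ⟨e, heS, hxe⟩
            have hie : i ∈ e := by
              have h1 : x i = true := hxi
              rw [hxe] at h1
              simpa using h1
            induction e using Sym2.ind with
            | _ u v =>
              have hadj : G.Adj u v := (SimpleGraph.mem_edgeSet G).mp heS
              rw [Sym2.mem_iff] at hie
              have main : ∀ b' : Fin n, G.Adj i b' → s(u, v) = s(i, b') →
                  ∃ w ∈ N, x = Function.update (fun j => decide (j = i)) w true := by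
                intro b' hab heq
                have hbi : b' ≠ i := fun h => G.irrefl (h ▸ hab)
                have hxeq : x = fun j => decide (j ∈ s(i, b')) := by rw [hxe, heq]
                have hbfree : ρ b' = none := by
                  cases hb : ρ b' with
                  | none => rfl
                  | some bb =>
                    cases bb with
                    | true => exact absurd hb (hρ b')
                    | false =>
                      have h1 : x b' = false := hxρ b' false hb
                      rw [hxeq] at h1
                      simp [Sym2.mem_mk_right] at h1
                refine ⟨b', ?_, ?_⟩
                · rw [hNdef, Finset.mem_filter, SimpleGraph.mem_neighborFinset]
                  exact ⟨hab, hbfree⟩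
                · rw [hxeq]
                  funext j
                  by_cases hjb : j = b'
                  · subst hjb
                    simp [Function.update_self, Sym2.mem_mk_right]
                  · rw [Function.update_of_ne hjb]
                    simp only [Sym2.mem_iff, decide_eq_decide]
                    constructor
                    · rintro (rfl | h)
                      · rfl
                      · exact absurd h hjb
                    · rintro rfl; left; rfl
              rcases hie with rfl | rfl
              · exact main v hadj rfl
              · exact main u hadj.symm Sym2.eq_swap
          · rintro ⟨v, hv, rfl⟩
            rw [hNdef, Finset.mem_filter, SimpleGraph.mem_neighborFinset] at hv
            obtain ⟨hadj, hvfree⟩ := hv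
            refine ⟨s(i, v), (SimpleGraph.mem_edgeSet G).mpr hadj, ?_⟩
            funext j
            by_cases hjv : j = v
            · subst hjv
              simp [Function.update_self, Sym2.mem_mk_right]
            · rw [Function.update_of_ne hjv]
              simp only [Sym2.mem_iff, decide_eq_decide]
              constructor
              · rintro rfl; left; rfl
              · rintro (rfl | h)
                · rfl
                · exact absurd h hjv
        · intro j b hj
          by_cases hji : j = i
          · subst hji; rw [hρ''i] at hj; cases hj; simp
          · have hb : ρ j = some b := by rwa [hρ''eq j hji] at hj
            cases b with
            | true => exact absurd hb (hρ j)
            | false => simp [hji]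
      omega

/-- if every vertex cover of G (m edges) has size at least k', then every
decision tree computing IsEdge_G has size at least k' + m. -/
theorem stmt10 {n : ℕ} (G : SimpleGraph (Fin n)) [DecidableRel G.Adj] (k' : ℕ)
    (hk : ∀ C : Finset (Fin n), (∀ ⦃u v : Fin n⦄, G.Adj u v → u ∈ C ∨ v ∈ C) → k' ≤ C.card)
    (T : DTree (Fin n)) (hT : ∀ x, T.eval x = isEdge G x) :
    k' + G.edgeFinset.card ≤ T.size := by
  have h := lemB G T (fun _ => none) (fun i => by simp) k' ?_ (fun x _ => hT x)
  · simpa using h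
  · intro C hC
    apply hk
    intro u v hadj
    obtain ⟨i, hiC, hie⟩ := hC (s(u, v)) (SimpleGraph.mem_edgeFinset.mpr hadj)
      (fun j hj => by cases hj)
    rw [Sym2.mem_iff] at hie
    rcases hie with rfl | rfl
    · left; exact hiC
    · right; exact hiC
end

section
/- If a graph G with n vertices and m edges has a vertex cover of size at most k, then for any ℓ ∈ ℕ there is a decision tree computing the ℓ-amplified edge-indicator function ℓ-IsEdge_G of size at most (ℓ+1)(k+m) + mn. -/
open Classical

/-- The ℓ-amplified edge-indicator function of G. An input is a tuple
`(v⁽⁰⁾, v⁽¹⁾, ..., v⁽ˡ⁾)` of strings in {0,1}ⁿ, encoded as `x : Fin (ℓ+1) × Fin n → Bool`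
with `x (j, i) = v⁽ʲ⁾ᵢ`. Output is 1 iff `v⁽⁰⁾` is the indicator string of an edge of G and
every duplicated coordinate of each 1-coordinate of `v⁽⁰⁾` is 1. -/
noncomputable def ellIsEdge {n : ℕ} (ℓ : ℕ) (G : SimpleGraph (Fin n))
    (x : Fin (ℓ + 1) × Fin n → Bool) : Bool :=
  decide ((∃ e ∈ G.edgeSet, (fun i => x (0, i)) = fun i => decide (i ∈ e)) ∧
    ∀ (j : Fin (ℓ + 1)) (i : Fin n), x (0, i) = true → x (j, i) = true)

namespace Stmt11

def zeroChain {α : Type} : List α → DTree α → DTree α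
  | [], t => t
  | q :: qs, t => .node q (zeroChain qs t) (.leaf false)

def oneChain {α : Type} : List α → DTree α → DTree α
  | [], t => t
  | q :: qs, t => .node q (.leaf false) (oneChain qs t)

lemma zeroChain_eval {α : Type} (qs : List α) (t : DTree α) (x : α → Bool) :
    (zeroChain qs t).eval x = if ∀ q ∈ qs, x q = false then t.eval x else false := by
  induction qs with
  | nil => simp [zeroChain]
  | cons q qs ih =>
    simp only [zeroChain, DTree.eval, ih]
    by_cases h : x q = true
    · simp [h]
    · simp only [Bool.not_eq_true] at h
      simp [h]

lemma oneChain_eval {α : Type} (qs : List α) (t : DTree α) (x : α → Bool) :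
    (oneChain qs t).eval x = if ∀ q ∈ qs, x q = true then t.eval x else false := by
  induction qs with
  | nil => simp [oneChain]
  | cons q qs ih =>
    simp only [oneChain, DTree.eval, ih]
    by_cases h : x q = true
    · simp [h]
    · simp only [Bool.not_eq_true] at h
      simp [h]

lemma zeroChain_size {α : Type} (qs : List α) (t : DTree α) :
    (zeroChain qs t).size = qs.length + t.size := by
  induction qs with
  | nil => simp [zeroChain]
  | cons q qs ih => simp [zeroChain, DTree.size, ih]; omega

lemma oneChain_size {α : Type} (qs : List α) (t : DTree α) :
    (oneChain qs t).size = qs.length + t.size := by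
  induction qs with
  | nil => simp [oneChain]
  | cons q qs ih => simp [oneChain, DTree.size, ih]; omega

variable {n ℓ : ℕ}

/-- the duplicate coordinates (rows 1..ℓ) of vertex u -/
def dups (ℓ : ℕ) (u : Fin n) : List (Fin (ℓ + 1) × Fin n) :=
  (List.finRange ℓ).map fun j => (j.succ, u)

/-- check that row 0 is exactly the indicator of {u,v}, then check duplicates of v -/
def Sedge (ℓ : ℕ) (u v : Fin n) : DTree (Fin (ℓ + 1) × Fin n) :=
  zeroChain (((List.finRange n).filter fun w => w ≠ u ∧ w ≠ v).map
      fun w => ((0 : Fin (ℓ + 1)), w))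
    (oneChain (dups ℓ v) (.leaf true))

def nbrChain (ℓ : ℕ) (u : Fin n) : List (Fin n) → DTree (Fin (ℓ + 1) × Fin n)
  | [] => .leaf false
  | v :: vs => .node (0, v) (nbrChain ℓ u vs) (Sedge ℓ u v)

variable (G : SimpleGraph (Fin n)) [DecidableRel G.Adj]

noncomputable def nbrs (u : Fin n) (prior : List (Fin n)) : List (Fin n) :=
  (Finset.univ.filter fun v => G.Adj u v ∧ v ∉ prior).toList

noncomputable def coverTree (ℓ : ℕ) (prior : List (Fin n)) : List (Fin n) → DTree (Fin (ℓ + 1) × Fin n)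
  | [] => .leaf false
  | u :: us => .node (0, u) (coverTree ℓ (u :: prior) us)
      (oneChain (dups ℓ u) (nbrChain ℓ u (nbrs G u prior)))

/-! ### Characterization of ellIsEdge -/

lemma f_iff (x : Fin (ℓ + 1) × Fin n → Bool) :
    ellIsEdge ℓ G x = true ↔
      (∃ e ∈ G.edgeSet, ∀ i, (x (0, i) = true ↔ i ∈ e)) ∧
        ∀ (j : Fin (ℓ + 1)) (i : Fin n), x (0, i) = true → x (j, i) = true := by
  simp only [ellIsEdge, decide_eq_true_eq, funext_iff]
  constructor
  · rintro ⟨⟨e, he, hind⟩, h2⟩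
    exact ⟨⟨e, he, fun i => by rw [hind i]; simp⟩, h2⟩
  · rintro ⟨⟨e, he, hind⟩, h2⟩
    refine ⟨⟨e, he, fun i => ?_⟩, h2⟩
    by_cases h : i ∈ e
    · simp [h, (hind i).2 h]
    · simp only [h, decide_false]
      rw [← Bool.not_eq_true]
      exact fun hx => h ((hind i).1 hx)

lemma f_false {x : Fin (ℓ + 1) × Fin n → Bool}
    (h : ¬ ((∃ e ∈ G.edgeSet, ∀ i, (x (0, i) = true ↔ i ∈ e)) ∧
        ∀ (j : Fin (ℓ + 1)) (i : Fin n), x (0, i) = true → x (j, i) = true)) :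
    ellIsEdge ℓ G x = false := by
  rw [← Bool.not_eq_true, f_iff]
  exact h

lemma f_false_of_dup {x : Fin (ℓ + 1) × Fin n → Bool} {j : Fin (ℓ + 1)} {i : Fin n}
    (h1 : x (0, i) = true) (h2 : x (j, i) = false) : ellIsEdge ℓ G x = false := by
  apply f_false
  rintro ⟨-, h⟩
  have := h j i h1
  rw [h2] at this
  exact Bool.false_ne_true this

/-- if every neighbor of u is 0 in row 0 but u is 1, the function is 0. -/
lemma f_false_of_no_nbr {x : Fin (ℓ + 1) × Fin n → Bool} {u : Fin n}
    (hu : x (0, u) = true) (h : ∀ v, G.Adj u v → x (0, v) = false) :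
    ellIsEdge ℓ G x = false := by
  apply f_false
  rintro ⟨⟨e, he, hind⟩, -⟩
  induction e using Sym2.inductionOn with
  | hf a b =>
    rw [SimpleGraph.mem_edgeSet] at he
    have hu' : u = a ∨ u = b := Sym2.mem_iff.1 ((hind u).1 hu)
    rcases hu' with rfl | rfl
    · have := (hind b).2 (Sym2.mem_mk_right _ _)
      rw [h b he] at this
      exact Bool.false_ne_true this
    · have := (hind a).2 (Sym2.mem_mk_left _ _)
      rw [h a he.symm] at this
      exact Bool.false_ne_true this

/-- three distinct 1s in row 0 make the function 0. -/
lemma f_false_of_three {x : Fin (ℓ + 1) × Fin n → Bool} {u v w : Fin n}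
    (hu : x (0, u) = true) (hv : x (0, v) = true) (hw : x (0, w) = true)
    (huv : u ≠ v) (hwu : w ≠ u) (hwv : w ≠ v) : ellIsEdge ℓ G x = false := by
  apply f_false
  rintro ⟨⟨e, he, hind⟩, -⟩
  induction e using Sym2.inductionOn with
  | hf a b =>
    have h1 := Sym2.mem_iff.1 ((hind u).1 hu)
    have h2 := Sym2.mem_iff.1 ((hind v).1 hv)
    have h3 := Sym2.mem_iff.1 ((hind w).1 hw)
    rcases h1 with rfl | rfl <;> rcases h2 with rfl | rfl <;> rcases h3 with rfl | rfl <;>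
      simp_all

/-- if for every edge some endpoint is 0 in row 0, the function is 0. -/
lemma f_false_of_all_zero {x : Fin (ℓ + 1) × Fin n → Bool}
    (h : ∀ a b : Fin n, G.Adj a b → x (0, a) = false ∨ x (0, b) = false) :
    ellIsEdge ℓ G x = false := by
  apply f_false
  rintro ⟨⟨e, he, hind⟩, -⟩
  induction e using Sym2.inductionOn with
  | hf a b =>
    rw [SimpleGraph.mem_edgeSet] at he
    have ha := (hind a).2 (Sym2.mem_mk_left _ _)
    have hb := (hind b).2 (Sym2.mem_mk_right _ _)
    rcases h a b he with h' | h'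
    · rw [h'] at ha; exact Bool.false_ne_true ha
    · rw [h'] at hb; exact Bool.false_ne_true hb

/-! ### Correctness -/

lemma Sedge_eval {x : Fin (ℓ + 1) × Fin n → Bool} {u v : Fin n}
    (hadj : G.Adj u v) (hu : x (0, u) = true) (hv : x (0, v) = true)
    (hdu : ∀ j : Fin ℓ, x (j.succ, u) = true) :
    (Sedge ℓ u v).eval x = ellIsEdge ℓ G x := by
  have huv : u ≠ v := G.ne_of_adj hadj
  rw [Sedge, zeroChain_eval]
  have hcond : (∀ q ∈ (((List.finRange n).filter fun w => w ≠ u ∧ w ≠ v).map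
      fun w => ((0 : Fin (ℓ + 1)), w)), x q = false) ↔
      (∀ w : Fin n, w ≠ u → w ≠ v → x (0, w) = false) := by
    constructor
    · intro h w h1 h2
      exact h (0, w) (List.mem_map.2 ⟨w, List.mem_filter.2
        ⟨List.mem_finRange w, by simp [h1, h2]⟩, rfl⟩)
    · intro h q hq
      rw [List.mem_map] at hq
      obtain ⟨w, hw, rfl⟩ := hq
      rw [List.mem_filter] at hw
      have hw2 := of_decide_eq_true hw.2
      exact h w hw2.1 hw2.2
  by_cases hz : ∀ w : Fin n, w ≠ u → w ≠ v → x (0, w) = false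
  · rw [if_pos (hcond.2 hz)]
    rw [oneChain_eval]
    by_cases hd : ∀ q ∈ dups ℓ v, x q = true
    · rw [if_pos hd]
      have hdv : ∀ j : Fin ℓ, x (j.succ, v) = true := by
        intro j
        exact hd _ (by simp [dups])
      have hf : ellIsEdge ℓ G x = true := by
        rw [f_iff]
        constructor
        · refine ⟨s(u, v), (SimpleGraph.mem_edgeSet G).2 hadj, fun i => ?_⟩
          rw [Sym2.mem_iff]
          constructor
          · intro hi
            by_contra hcon
            push_neg at hcon
            rw [hz i hcon.1 hcon.2] at hi
            exact Bool.false_ne_true hi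
          · rintro (rfl | rfl) <;> assumption
        · intro j i hi
          have hi' : i = u ∨ i = v := by
            by_contra hcon
            push_neg at hcon
            rw [hz i hcon.1 hcon.2] at hi
            exact Bool.false_ne_true hi
          refine Fin.cases ?_ ?_ j
          · rcases hi' with rfl | rfl <;> assumption
          · intro j'
            rcases hi' with rfl | rfl
            · exact hdu j'
            · exact hdv j'
      rw [hf]
      rfl
    · rw [if_neg hd]
      push_neg at hd
      obtain ⟨q, hq, hxq⟩ := hd
      simp only [dups, List.mem_map, List.mem_finRange, true_and] at hq
      obtain ⟨j, rfl⟩ := hq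
      simp only [ne_eq, Bool.not_eq_true] at hxq
      exact (f_false_of_dup G hv hxq).symm
  · rw [if_neg (fun hc => hz (hcond.1 hc))]
    push_neg at hz
    obtain ⟨w, hw1, hw2, hw3⟩ := hz
    simp only [ne_eq, Bool.not_eq_false] at hw3
    exact (f_false_of_three G hu hv hw3 huv hw1 hw2).symm

lemma nbrChain_eval {x : Fin (ℓ + 1) × Fin n → Bool} {u : Fin n}
    (hu : x (0, u) = true) (hdu : ∀ j : Fin ℓ, x (j.succ, u) = true) :
    ∀ vs : List (Fin n), (∀ v ∈ vs, G.Adj u v) →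
    (∀ v, G.Adj u v → v ∈ vs ∨ x (0, v) = false) →
    (nbrChain ℓ u vs).eval x = ellIsEdge ℓ G x := by
  intro vs
  induction vs with
  | nil =>
    intro _ hnb
    rw [nbrChain]
    simp only [DTree.eval]
    symm
    apply f_false_of_no_nbr G hu
    intro v hv
    rcases hnb v hv with h | h
    · exact absurd h (List.not_mem_nil)
    · exact h
  | cons v vs ih =>
    intro hadj hnb
    rw [nbrChain]
    simp only [DTree.eval]
    by_cases hxv : x (0, v) = true
    · rw [if_pos hxv]
      exact Sedge_eval G (hadj v (List.mem_cons_self)) hu hxv hdu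
    · rw [if_neg (by simp [hxv])]
      apply ih
      · intro w hw; exact hadj w (List.mem_cons_of_mem v hw)
      · intro w hw
        rcases hnb w hw with h | h
        · rcases List.mem_cons.1 h with rfl | h
          · right; rw [← Bool.not_eq_true]; exact hxv
          · left; exact h
        · right; exact h

lemma coverTree_eval (x : Fin (ℓ + 1) × Fin n → Bool) :
    ∀ (us prior : List (Fin n)),
    (∀ w ∈ prior, x (0, w) = false) →
    (∀ a b : Fin n, G.Adj a b → (a ∈ prior ∨ a ∈ us) ∨ (b ∈ prior ∨ b ∈ us)) →
    (coverTree G ℓ prior us).eval x = ellIsEdge ℓ G x := by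
  intro us
  induction us with
  | nil =>
    intro prior hp hcov
    rw [coverTree]
    simp only [DTree.eval]
    symm
    apply f_false_of_all_zero G
    intro a b hab
    rcases hcov a b hab with (h | h) | (h | h)
    · exact Or.inl (hp a h)
    · exact absurd h (List.not_mem_nil)
    · exact Or.inr (hp b h)
    · exact absurd h (List.not_mem_nil)
  | cons u us ih =>
    intro prior hp hcov
    rw [coverTree]
    simp only [DTree.eval]
    by_cases hxu : x (0, u) = true
    · rw [if_pos hxu, oneChain_eval]
      by_cases hd : ∀ q ∈ dups ℓ u, x q = true
      · rw [if_pos hd]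
        have hdu : ∀ j : Fin ℓ, x (j.succ, u) = true := fun j => hd _ (by simp [dups])
        apply nbrChain_eval G hxu hdu
        · intro v hv
          simp only [nbrs, Finset.mem_toList, Finset.mem_filter] at hv
          exact hv.2.1
        · intro v hv
          by_cases hvp : v ∈ prior
          · right; exact hp v hvp
          · left
            simp only [nbrs, Finset.mem_toList, Finset.mem_filter]
            exact ⟨Finset.mem_univ v, hv, hvp⟩
      · rw [if_neg hd]
        push_neg at hd
        obtain ⟨q, hq, hxq⟩ := hd
        simp only [dups, List.mem_map, List.mem_finRange, true_and] at hq
        obtain ⟨j, rfl⟩ := hq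
        simp only [ne_eq, Bool.not_eq_true] at hxq
        exact (f_false_of_dup G hxu hxq).symm
    · rw [if_neg (by simp [hxu])]
      apply ih
      · intro w hw
        rcases List.mem_cons.1 hw with rfl | hw
        · rw [← Bool.not_eq_true]; exact hxu
        · exact hp w hw
      · intro a b hab
        rcases hcov a b hab with (h | h) | (h | h)
        · exact Or.inl (Or.inl (List.mem_cons_of_mem u h))
        · rcases List.mem_cons.1 h with rfl | h
          · exact Or.inl (Or.inl (List.mem_cons_self))
          · exact Or.inl (Or.inr h)
        · exact Or.inr (Or.inl (List.mem_cons_of_mem u h))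
        · rcases List.mem_cons.1 h with rfl | h
          · exact Or.inr (Or.inl (List.mem_cons_self))
          · exact Or.inr (Or.inr h)

/-! ### Size -/

lemma Sedge_size (u v : Fin n) : (Sedge ℓ u v).size ≤ n + ℓ := by
  rw [Sedge, zeroChain_size, oneChain_size]
  have h1 : (((List.finRange n).filter fun w => w ≠ u ∧ w ≠ v).map
      fun w => ((0 : Fin (ℓ + 1)), w)).length ≤ n := by
    rw [List.length_map]
    calc ((List.finRange n).filter fun w => w ≠ u ∧ w ≠ v).length
        ≤ (List.finRange n).length := List.length_filter_le _ _
      _ = n := List.length_finRange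
  have h2 : (dups ℓ v).length = ℓ := by
    rw [dups, List.length_map, List.length_finRange]
  simp only [DTree.size]
  omega

lemma nbrChain_size (u : Fin n) (vs : List (Fin n)) :
    (nbrChain ℓ u vs).size ≤ vs.length * (n + ℓ + 1) := by
  induction vs with
  | nil => simp [nbrChain, DTree.size]
  | cons v vs ih =>
    rw [nbrChain]
    simp only [DTree.size, List.length_cons]
    have hs := Sedge_size (ℓ := ℓ) u v
    rw [Nat.add_mul, one_mul]
    linarith

def avail (prior : List (Fin n)) : Finset (Sym2 (Fin n)) :=
  G.edgeFinset.filter fun e => ∀ w ∈ e, w ∉ prior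

lemma avail_cons (u : Fin n) (prior : List (Fin n)) :
    avail G (u :: prior) = (avail G prior).filter fun e => ¬ u ∈ e := by
  ext e
  simp only [avail, Finset.mem_filter, List.mem_cons]
  constructor
  · rintro ⟨he, h⟩
    refine ⟨⟨he, fun w hw => fun hc => (h w hw) (Or.inr hc)⟩, fun hc => (h u hc) (Or.inl rfl)⟩
  · rintro ⟨⟨he, h⟩, hu⟩
    refine ⟨he, fun w hw => ?_⟩
    rintro (rfl | hc)
    · exact hu hw
    · exact h w hw hc

lemma nbrs_length_le (u : Fin n) (prior : List (Fin n)) (hu : u ∉ prior) :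
    (nbrs G u prior).length ≤ ((avail G prior).filter fun e => u ∈ e).card := by
  rw [nbrs, Finset.length_toList]
  apply Finset.card_le_card_of_injOn (fun v => s(u, v))
  · intro v hv
    simp only [Finset.mem_coe, Finset.mem_filter, Finset.mem_univ, true_and] at hv
    simp only [Finset.mem_coe, Finset.mem_filter, avail, SimpleGraph.mem_edgeFinset, SimpleGraph.mem_edgeSet]
    refine ⟨⟨hv.1, fun w hw => ?_⟩, Sym2.mem_mk_left _ _⟩
    rcases Sym2.mem_iff.1 hw with rfl | rfl
    · exact hu
    · exact hv.2
  · intro a ha b hb hab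
    simp only [Finset.mem_coe, Finset.mem_filter, Finset.mem_univ, true_and] at ha hb
    rcases Sym2.eq_iff.1 hab with ⟨-, h⟩ | ⟨h1, h2⟩
    · exact h
    · exact h2.trans h1

lemma coverTree_size :
    ∀ (us prior : List (Fin n)), us.Nodup → (∀ u ∈ us, u ∉ prior) →
    (coverTree G ℓ prior us).size ≤
      us.length * (ℓ + 1) + (avail G prior).card * (n + ℓ + 1) := by
  intro us
  induction us with
  | nil => intro prior _ _; simp [coverTree, DTree.size]
  | cons u us ih =>
    intro prior hnd hdisj
    rw [coverTree]
    simp only [DTree.size, List.length_cons]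
    have hrec := ih (u :: prior) (List.nodup_cons.1 hnd).2
      (fun v hv => by
        rw [List.mem_cons]
        rintro (rfl | hc)
        · exact (List.nodup_cons.1 hnd).1 hv
        · exact hdisj v (List.mem_cons_of_mem u hv) hc)
    have hone : (oneChain (dups ℓ u) (nbrChain ℓ u (nbrs G u prior))).size ≤
        ℓ + (nbrs G u prior).length * (n + ℓ + 1) := by
      rw [oneChain_size]
      have h2 : (dups ℓ u).length = ℓ := by rw [dups, List.length_map, List.length_finRange]
      rw [h2]
      exact Nat.add_le_add_left (nbrChain_size (ℓ := ℓ) u (nbrs G u prior)) ℓ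
    have hnb := nbrs_length_le G u prior (hdisj u (List.mem_cons_self))
    have hsplit : ((avail G prior).filter fun e => u ∈ e).card +
        (avail G (u :: prior)).card = (avail G prior).card := by
      rw [avail_cons]
      exact Finset.card_filter_add_card_filter_not _
    have hmul : (nbrs G u prior).length * (n + ℓ + 1) ≤
        ((avail G prior).filter fun e => u ∈ e).card * (n + ℓ + 1) :=
      Nat.mul_le_mul_right _ hnb
    rw [← hsplit, Nat.add_mul, Nat.add_mul, one_mul]
    linarith

end Stmt11

/-- if G (n vertices, m edges) has a vertex cover of size at most k, then for
any ℓ there is a decision tree computing ℓ-IsEdge_G of size at most (ℓ+1)(k+m) + mn. -/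
theorem stmt11 {n : ℕ} (G : SimpleGraph (Fin n)) [DecidableRel G.Adj] (ℓ k : ℕ)
    (C : Finset (Fin n)) (hC : ∀ ⦃u v : Fin n⦄, G.Adj u v → u ∈ C ∨ v ∈ C)
    (hCk : C.card ≤ k) :
    ∃ T : DTree (Fin (ℓ + 1) × Fin n), (∀ x, T.eval x = ellIsEdge ℓ G x) ∧
      T.size ≤ (ℓ + 1) * (k + G.edgeFinset.card) + G.edgeFinset.card * n := by
  refine ⟨Stmt11.coverTree G ℓ [] C.toList, ?_, ?_⟩
  · intro x
    apply Stmt11.coverTree_eval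
    · intro w hw; exact absurd hw (List.not_mem_nil)
    · intro a b hab
      rcases hC hab with h | h
      · exact Or.inl (Or.inr (Finset.mem_toList.2 h))
      · exact Or.inr (Or.inr (Finset.mem_toList.2 h))
  · have h := Stmt11.coverTree_size (ℓ := ℓ) G C.toList [] (Finset.nodup_toList C)
      (fun u _ => List.not_mem_nil)
    have hlen : C.toList.length = C.card := Finset.length_toList C
    have havail : (Stmt11.avail G []).card ≤ G.edgeFinset.card :=
      Finset.card_le_card (Finset.filter_subset _ _)
    set m := G.edgeFinset.card
    calc (Stmt11.coverTree G ℓ [] C.toList).size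
        ≤ C.toList.length * (ℓ + 1) + (Stmt11.avail G []).card * (n + ℓ + 1) := h
      _ ≤ k * (ℓ + 1) + m * (n + ℓ + 1) := by
          apply Nat.add_le_add
          · rw [hlen]; exact Nat.mul_le_mul_right _ hCk
          · exact Nat.mul_le_mul_right _ havail
      _ = (ℓ + 1) * (k + m) + m * n := by ring
end

section
/- If every vertex cover of a graph G with m edges has size at least k', then for any ℓ ∈ ℕ every decision tree computing ℓ-IsEdge_G has size at least (ℓ+1)(k'+m). -/
open Classical

namespace Stmt12

set_option linter.unusedSectionVars false

variable {n : ℕ} (ℓ : ℕ) (G : SimpleGraph (Fin n)) [DecidableRel G.Adj]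

/-- consistency of an input with a partial assignment -/
def Cons (ρ : Fin (ℓ+1) × Fin n → Option Bool) (x : Fin (ℓ+1) × Fin n → Bool) : Prop :=
  ∀ q b, ρ q = some b → x q = b

/-- the canonical accepting input for an edge -/
def xe (e : Sym2 (Fin n)) : Fin (ℓ+1) × Fin n → Bool := fun q => decide (q.2 ∈ e)

/-- live edges: edges whose canonical input is consistent with ρ -/
noncomputable def liveE (ρ : Fin (ℓ+1) × Fin n → Option Bool) : Finset (Sym2 (Fin n)) :=
  G.edgeFinset.filter (fun e => ∀ q b, ρ q = some b → b = decide (q.2 ∈ e))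

/-- minimum vertex cover size of a finite edge set -/
noncomputable def tau (E' : Finset (Sym2 (Fin n))) : ℕ :=
  sInf {k | ∃ C : Finset (Fin n), (∀ e ∈ E', ∃ u ∈ C, u ∈ e) ∧ C.card = k}

noncomputable def tcount (ρ : Fin (ℓ+1) × Fin n → Option Bool) : ℕ :=
  (Finset.univ.filter (fun q : Fin (ℓ+1) × Fin n => ρ q = some true)).card

noncomputable def mu (ρ : Fin (ℓ+1) × Fin n → Option Bool) : ℕ :=
  if (liveE ℓ G ρ).Nonempty then
    (ℓ+1) * ((liveE ℓ G ρ).card + tau (liveE ℓ G ρ)) - tcount ℓ ρ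
  else 0

lemma tau_set_nonempty (E' : Finset (Sym2 (Fin n))) :
    {k | ∃ C : Finset (Fin n), (∀ e ∈ E', ∃ u ∈ C, u ∈ e) ∧ C.card = k}.Nonempty :=
  ⟨(Finset.univ : Finset (Fin n)).card, Finset.univ,
    fun e _ => ⟨e.out.1, Finset.mem_univ _, Sym2.out_fst_mem e⟩, rfl⟩

lemma exists_tau_cover (E' : Finset (Sym2 (Fin n))) :
    ∃ C : Finset (Fin n), (∀ e ∈ E', ∃ u ∈ C, u ∈ e) ∧ C.card = tau E' :=
  Nat.sInf_mem (tau_set_nonempty E')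

lemma tau_le {E' : Finset (Sym2 (Fin n))} {C : Finset (Fin n)}
    (h : ∀ e ∈ E', ∃ u ∈ C, u ∈ e) : tau E' ≤ C.card :=
  Nat.sInf_le ⟨C, h, rfl⟩

lemma one_le_tau {E' : Finset (Sym2 (Fin n))} (h : E'.Nonempty) : 1 ≤ tau E' := by
  obtain ⟨C, hC, hcard⟩ := exists_tau_cover E'
  obtain ⟨e, he⟩ := h
  obtain ⟨u, hu, -⟩ := hC e he
  rw [← hcard]
  exact Finset.card_pos.2 ⟨u, hu⟩

lemma mem_liveE {ρ : Fin (ℓ+1) × Fin n → Option Bool} {e : Sym2 (Fin n)} :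
    e ∈ liveE ℓ G ρ ↔ e ∈ G.edgeFinset ∧ ∀ q b, ρ q = some b → b = decide (q.2 ∈ e) :=
  Finset.mem_filter

lemma xe_cons {ρ : Fin (ℓ+1) × Fin n → Option Bool} {e : Sym2 (Fin n)}
    (he : e ∈ liveE ℓ G ρ) : Cons ℓ ρ (xe ℓ e) := by
  intro q b h
  have := ((mem_liveE ℓ G).1 he).2 q b h
  simp [xe, this]

lemma ellIsEdge_xe {e : Sym2 (Fin n)} (he : e ∈ G.edgeSet) :
    ellIsEdge ℓ G (xe ℓ e) = true := by
  have : ((∃ e' ∈ G.edgeSet, (fun i => xe ℓ e (0, i)) = fun i => decide (i ∈ e')) ∧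
      ∀ (j : Fin (ℓ + 1)) (i : Fin n), xe ℓ e (0, i) = true → xe ℓ e (j, i) = true) :=
    ⟨⟨e, he, rfl⟩, fun j i h => h⟩
  simp only [ellIsEdge, decide_eq_true_eq]
  exact this

lemma ellIsEdge_flip {e : Sym2 (Fin n)} (he : e ∈ G.edgeSet) {u : Fin n} (hu : u ∈ e)
    (j₀ : Fin (ℓ+1)) :
    ellIsEdge ℓ G (Function.update (xe ℓ e) (j₀, u) false) = false := by
  set y := Function.update (xe ℓ e) (j₀, u) false with hy
  have hyval : ∀ q : Fin (ℓ+1) × Fin n, q ≠ (j₀, u) → y q = decide (q.2 ∈ e) := by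
    intro q hq
    rw [hy, Function.update_of_ne hq]
    rfl
  have hyu : y (j₀, u) = false := by rw [hy, Function.update_self]
  simp only [ellIsEdge, decide_eq_false_iff_not]
  rintro ⟨⟨e', he', hrow⟩, hdup⟩
  by_cases hj : j₀ = 0
  · subst hj
    have hu' : u ∉ e' := by
      have h1 := congrFun hrow u
      rw [hyu] at h1
      exact of_decide_eq_false h1.symm
    obtain ⟨v, rfl⟩ := Sym2.mem_iff_exists.1 hu
    have hne : u ≠ v := by
      intro h
      exact (G.not_isDiag_of_mem_edgeSet he) (Sym2.mk_isDiag_iff.2 h)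
    have hv' : v ∈ e' := by
      have h1 := congrFun hrow v
      have h2 : y (0, v) = true := by
        rw [hyval (0, v) (by simp [Ne.symm hne])]
        simp
      rw [h2] at h1
      exact of_decide_eq_true h1.symm
    obtain ⟨w, rfl⟩ := Sym2.mem_iff_exists.1 hv'
    have hwu : w ≠ u := by
      intro h
      subst h
      exact hu' (Sym2.mem_mk_right v w)
    have hw : w ∈ s(u, v) := by
      have h1 := congrFun hrow w
      have h2 : y (0, w) = decide (w ∈ s(u, v)) := hyval (0, w) (by simp [hwu])
      rw [h2] at h1
      have h3 : decide (w ∈ s(u, v)) = true := by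
        rw [h1]
        simp [decide_eq_true_eq]
      exact of_decide_eq_true h3
    have hwv : w = v := by
      rcases Sym2.mem_iff.1 hw with h | h
      · exact absurd h hwu
      · exact h
    subst hwv
    exact (G.not_isDiag_of_mem_edgeSet he') (Sym2.mk_isDiag_iff.2 rfl)
  · have h0u : y (0, u) = true := by
      rw [hyval (0, u) (by simp [Ne.symm hj])]
      simp [hu]
    have := hdup j₀ u h0u
    rw [hyu] at this
    cases this

lemma cons_flip {ρ : Fin (ℓ+1) × Fin n → Option Bool} {e : Sym2 (Fin n)}
    (he : e ∈ liveE ℓ G ρ) {q : Fin (ℓ+1) × Fin n} (hq : ρ q = none) :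
    Cons ℓ ρ (Function.update (xe ℓ e) q false) := by
  intro q' b h
  have hne : q' ≠ q := by
    intro h'
    subst h'
    rw [hq] at h
    cases h
  rw [Function.update_of_ne hne]
  exact xe_cons ℓ G he q' b h

lemma liveE_update {ρ : Fin (ℓ+1) × Fin n → Option Bool} {q : Fin (ℓ+1) × Fin n}
    (hq : ρ q = none) (b : Bool) :
    liveE ℓ G (Function.update ρ q (some b)) =
      (liveE ℓ G ρ).filter (fun e => b = decide (q.2 ∈ e)) := by
  ext e
  simp only [mem_liveE, Finset.mem_filter]
  constructor
  · rintro ⟨hE, h⟩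
    exact ⟨⟨hE, fun q' b' hq' => h q' b' (by
      have hne : q' ≠ q := by
        intro h'; subst h'; rw [hq] at hq'; cases hq'
      rw [Function.update_of_ne hne]; exact hq')⟩,
      h q b (by rw [Function.update_self])⟩
  · rintro ⟨⟨hE, h⟩, hb⟩
    refine ⟨hE, fun q' b' hq' => ?_⟩
    by_cases h' : q' = q
    · subst h'
      rw [Function.update_self] at hq'
      cases hq'
      exact hb
    · rw [Function.update_of_ne h'] at hq'
      exact h q' b' hq'

lemma tcount_update_false {ρ : Fin (ℓ+1) × Fin n → Option Bool} {q : Fin (ℓ+1) × Fin n}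
    (hq : ρ q = none) :
    tcount ℓ (Function.update ρ q (some false)) = tcount ℓ ρ := by
  unfold tcount
  congr 1
  ext q'
  by_cases h : q' = q
  · subst h
    simp [Function.update_self, hq]
  · simp [Function.update_of_ne h]

lemma tcount_update_true {ρ : Fin (ℓ+1) × Fin n → Option Bool} {q : Fin (ℓ+1) × Fin n}
    (hq : ρ q = none) :
    tcount ℓ (Function.update ρ q (some true)) = tcount ℓ ρ + 1 := by
  unfold tcount
  have hset : (Finset.univ.filter
      (fun q' : Fin (ℓ+1) × Fin n => Function.update ρ q (some true) q' = some true)) =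
      insert q (Finset.univ.filter (fun q' : Fin (ℓ+1) × Fin n => ρ q' = some true)) := by
    ext q'
    by_cases h : q' = q
    · subst h
      simp [Function.update_self]
    · simp [Function.update_of_ne h, h]
  rw [hset, Finset.card_insert_of_notMem (by simp [hq])]

lemma mu_leaf {ρ : Fin (ℓ+1) × Fin n → Option Bool} {b : Bool}
    (h : ∀ x, Cons ℓ ρ x → ellIsEdge ℓ G x = b) : mu ℓ G ρ = 0 := by
  unfold mu
  split_ifs with hne
  swap
  · rfl
  obtain ⟨e, he⟩ := hne
  have heS : e ∈ G.edgeSet := SimpleGraph.mem_edgeFinset.1 ((mem_liveE ℓ G).1 he).1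
  have hb : b = true := by
    have := h (xe ℓ e) (xe_cons ℓ G he)
    rw [ellIsEdge_xe ℓ G heS] at this
    exact this.symm
  subst hb
  -- every coordinate over a vertex of a live edge is fixed to true
  have hfix : ∀ e' ∈ liveE ℓ G ρ, ∀ u ∈ e', ∀ j : Fin (ℓ+1), ρ (j, u) = some true := by
    intro e' he' u hu j
    have he'S : e' ∈ G.edgeSet := SimpleGraph.mem_edgeFinset.1 ((mem_liveE ℓ G).1 he').1
    cases hρ : ρ (j, u) with
    | none =>
      exfalso
      have hcons := cons_flip ℓ G he' hρ
      have hfalse := ellIsEdge_flip ℓ G he'S hu j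
      have := h _ hcons
      rw [hfalse] at this
      cases this
    | some b' =>
      have := ((mem_liveE ℓ G).1 he').2 (j, u) b' hρ
      have hb' : b' = true := by
        rw [this]
        simp [hu]
      rw [hb']
  obtain ⟨⟨u, v⟩⟩ := e
  have hu : u ∈ s(u, v) := Sym2.mem_mk_left u v
  have huv : u ≠ v := fun h' => (G.not_isDiag_of_mem_edgeSet heS) (Sym2.mk_isDiag_iff.2 h')
  have hv : v ∈ s(u, v) := Sym2.mem_mk_right u v
  -- the live edge set is exactly {s(u,v)}
  have hsingle : liveE ℓ G ρ = {s(u, v)} := by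
    apply Finset.eq_singleton_iff_unique_mem.2
    refine ⟨he, fun e'' he'' => ?_⟩
    have hu'' : u ∈ e'' := by
      have := ((mem_liveE ℓ G).1 he'').2 (0, u) true (hfix _ he u hu 0)
      exact of_decide_eq_true this.symm
    have hv'' : v ∈ e'' := by
      have := ((mem_liveE ℓ G).1 he'').2 (0, v) true (hfix _ he v hv 0)
      exact of_decide_eq_true this.symm
    exact (Sym2.mem_and_mem_iff huv).1 ⟨hu'', hv''⟩
  have hcard : (liveE ℓ G ρ).card = 1 := by rw [hsingle]; rfl
  have htau : tau (liveE ℓ G ρ) ≤ 1 := by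
    have : tau (liveE ℓ G ρ) ≤ ({u} : Finset (Fin n)).card := by
      apply tau_le
      intro e'' he''
      rw [hsingle, Finset.mem_singleton] at he''
      subst he''
      exact ⟨u, Finset.mem_singleton_self u, hu⟩
    simpa using this
  -- tcount is at least 2(ℓ+1)
  have htc : 2 * (ℓ+1) ≤ tcount ℓ ρ := by
    classical
    set Su : Finset (Fin (ℓ+1) × Fin n) :=
      Finset.univ.image (fun j : Fin (ℓ+1) => (j, u)) with hSu
    set Sv : Finset (Fin (ℓ+1) × Fin n) :=
      Finset.univ.image (fun j : Fin (ℓ+1) => (j, v)) with hSv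
    have hinj_u : Function.Injective (fun j : Fin (ℓ+1) => ((j, u) : Fin (ℓ+1) × Fin n)) := by
      intro a b hab
      exact (Prod.ext_iff.1 hab).1
    have hinj_v : Function.Injective (fun j : Fin (ℓ+1) => ((j, v) : Fin (ℓ+1) × Fin n)) := by
      intro a b hab
      exact (Prod.ext_iff.1 hab).1
    have hdisj : Disjoint Su Sv := by
      rw [Finset.disjoint_left]
      intro q hqu hqv
      rw [hSu, Finset.mem_image] at hqu
      rw [hSv, Finset.mem_image] at hqv
      obtain ⟨j1, -, rfl⟩ := hqu
      obtain ⟨j2, -, h2⟩ := hqv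
      exact huv ((Prod.ext_iff.1 h2).2).symm
    have hsubset : Su ∪ Sv ⊆
        Finset.univ.filter (fun q : Fin (ℓ+1) × Fin n => ρ q = some true) := by
      intro q hq
      rcases Finset.mem_union.1 hq with hq | hq
      · rw [hSu, Finset.mem_image] at hq
        obtain ⟨j, -, rfl⟩ := hq
        simp only [Finset.mem_filter, Finset.mem_univ, true_and]
        exact hfix _ he u hu j
      · rw [hSv, Finset.mem_image] at hq
        obtain ⟨j, -, rfl⟩ := hq
        simp only [Finset.mem_filter, Finset.mem_univ, true_and]
        exact hfix _ he v hv j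
    have hcard2 : (Su ∪ Sv).card = 2 * (ℓ+1) := by
      rw [Finset.card_union_of_disjoint hdisj, hSu, hSv,
        Finset.card_image_of_injective _ hinj_u, Finset.card_image_of_injective _ hinj_v]
      simp
      ring
    calc 2 * (ℓ+1) = (Su ∪ Sv).card := hcard2.symm
      _ ≤ _ := Finset.card_le_card hsubset
  apply Nat.sub_eq_zero_of_le
  calc (ℓ+1) * ((liveE ℓ G ρ).card + tau (liveE ℓ G ρ)) ≤ (ℓ+1) * 2 := by
        apply Nat.mul_le_mul_left
        omega
    _ ≤ tcount ℓ ρ := by omega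

lemma mu_step {ρ : Fin (ℓ+1) × Fin n → Option Bool} {q : Fin (ℓ+1) × Fin n}
    (hq : ρ q = none) :
    mu ℓ G ρ ≤ 1 + mu ℓ G (Function.update ρ q (some false))
      + mu ℓ G (Function.update ρ q (some true)) := by
  by_cases hne : (liveE ℓ G ρ).Nonempty
  swap
  · have hz : mu ℓ G ρ = 0 := by unfold mu; rw [if_neg hne]
    omega
  set E := liveE ℓ G ρ with hE
  set E0 := E.filter (fun e => ¬ q.2 ∈ e) with hE0def
  set E1 := E.filter (fun e => q.2 ∈ e) with hE1def
  have h0' : liveE ℓ G (Function.update ρ q (some false)) = E0 := by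
    rw [liveE_update ℓ G hq false, hE0def]
    apply Finset.filter_congr
    intro e _
    simp
  have h1' : liveE ℓ G (Function.update ρ q (some true)) = E1 := by
    rw [liveE_update ℓ G hq true, hE1def]
    apply Finset.filter_congr
    intro e _
    simp
  have tc0 := tcount_update_false ℓ hq
  have tc1 := tcount_update_true ℓ hq
  have hpart : E1.card + E0.card = E.card := by
    rw [hE0def, hE1def]
    exact Finset.card_filter_add_card_filter_not _
  have hmu : mu ℓ G ρ = (ℓ+1) * (E.card + tau E) - tcount ℓ ρ := by
    unfold mu
    rw [if_pos hne]
  by_cases hne1 : E1.Nonempty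
  swap
  · -- no live edge contains q.2 : the `true` branch dies, `false` branch unchanged
    have hE1e : E1 = ∅ := Finset.not_nonempty_iff_eq_empty.1 hne1
    have hE0e : E0 = E := by
      ext e
      rw [hE0def, Finset.mem_filter]
      constructor
      · rintro ⟨h, -⟩; exact h
      · intro h
        refine ⟨h, fun hmem => ?_⟩
        have : e ∈ E1 := by rw [hE1def, Finset.mem_filter]; exact ⟨h, hmem⟩
        rw [hE1e] at this
        exact absurd this (Finset.notMem_empty e)
    have hmu0 : mu ℓ G (Function.update ρ q (some false)) = mu ℓ G ρ := by
      unfold mu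
      rw [h0', hE0e, tc0, ← hE]
    omega
  by_cases hne0 : E0.Nonempty
  swap
  · -- every live edge contains q.2
    have hE0e : E0 = ∅ := Finset.not_nonempty_iff_eq_empty.1 hne0
    have hE1e : E1 = E := by
      ext e
      rw [hE1def, Finset.mem_filter]
      constructor
      · rintro ⟨h, -⟩; exact h
      · intro h
        refine ⟨h, ?_⟩
        by_contra hmem
        have : e ∈ E0 := by rw [hE0def, Finset.mem_filter]; exact ⟨h, hmem⟩
        rw [hE0e] at this
        exact absurd this (Finset.notMem_empty e)
    have hmu1 : mu ℓ G (Function.update ρ q (some true)) =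
        (ℓ+1) * (E.card + tau E) - (tcount ℓ ρ + 1) := by
      unfold mu
      rw [h1', hE1e, tc1, if_pos hne]
    omega
  -- both branches keep live edges
  have hm0 : 1 ≤ E0.card := Finset.card_pos.2 hne0
  have hm1 : 1 ≤ E1.card := Finset.card_pos.2 hne1
  have htau0 : 1 ≤ tau E0 := one_le_tau hne0
  have htau1 : 1 ≤ tau E1 := one_le_tau hne1
  have htau_le : tau E ≤ tau E0 + 1 := by
    obtain ⟨C0, hC0, hC0card⟩ := exists_tau_cover E0
    have hcov : ∀ e ∈ E, ∃ u ∈ insert q.2 C0, u ∈ e := by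
      intro e he
      by_cases hmem : q.2 ∈ e
      · exact ⟨q.2, Finset.mem_insert_self _ _, hmem⟩
      · have : e ∈ E0 := by rw [hE0def, Finset.mem_filter]; exact ⟨he, hmem⟩
        obtain ⟨u, hu, hue⟩ := hC0 e this
        exact ⟨u, Finset.mem_insert_of_mem hu, hue⟩
    calc tau E ≤ (insert q.2 C0).card := tau_le hcov
      _ ≤ C0.card + 1 := Finset.card_insert_le _ _
      _ = tau E0 + 1 := by rw [hC0card]
  have hmu0 : mu ℓ G (Function.update ρ q (some false)) =
      (ℓ+1) * (E0.card + tau E0) - tcount ℓ ρ := by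
    unfold mu
    rw [h0', tc0, if_pos hne0]
  have hmu1 : mu ℓ G (Function.update ρ q (some true)) =
      (ℓ+1) * (E1.card + tau E1) - (tcount ℓ ρ + 1) := by
    unfold mu
    rw [h1', tc1, if_pos hne1]
  by_cases hT : tcount ℓ ρ = 0
  · -- no coordinate fixed to true yet
    have hsum : E.card + tau E ≤ (E0.card + tau E0) + (E1.card + tau E1) := by omega
    have k1 : (ℓ+1) * (E.card + tau E) ≤
        (ℓ+1) * (E0.card + tau E0) + (ℓ+1) * (E1.card + tau E1) := by
      calc (ℓ+1) * (E.card + tau E)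
          ≤ (ℓ+1) * ((E0.card + tau E0) + (E1.card + tau E1)) := Nat.mul_le_mul_left _ hsum
        _ = (ℓ+1) * (E0.card + tau E0) + (ℓ+1) * (E1.card + tau E1) := by ring
    have k2 : 1 ≤ (ℓ+1) * (E1.card + tau E1) :=
      Nat.mul_pos (by omega) (by omega)
    omega
  · -- some coordinate already fixed to true: all live edges share a common vertex
    obtain ⟨qs, hqs⟩ : ∃ qs, ρ qs = some true := by
      have : (Finset.univ.filter (fun q' : Fin (ℓ+1) × Fin n => ρ q' = some true)).Nonempty := by
        rw [← Finset.card_pos]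
        unfold tcount at hT
        omega
      obtain ⟨qs, hqs⟩ := this
      exact ⟨qs, (Finset.mem_filter.1 hqs).2⟩
    have hucov : ∀ e ∈ E, qs.2 ∈ e := by
      intro e he
      have := ((mem_liveE ℓ G).1 he).2 qs true hqs
      exact of_decide_eq_true this.symm
    have htauE : tau E ≤ 1 := by
      have : tau E ≤ ({qs.2} : Finset (Fin n)).card :=
        tau_le (fun e he => ⟨qs.2, Finset.mem_singleton_self _, hucov e he⟩)
      simpa using this
    have hTle : tcount ℓ ρ ≤ ℓ + 1 := by
      obtain ⟨e1, he1⟩ := hne1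
      obtain ⟨e0, he0⟩ := hne0
      have he1E : e1 ∈ E := (Finset.mem_filter.1 he1).1
      have he1q : q.2 ∈ e1 := (Finset.mem_filter.1 he1).2
      have he0E : e0 ∈ E := (Finset.mem_filter.1 he0).1
      have he0q : ¬ q.2 ∈ e0 := (Finset.mem_filter.1 he0).2
      have hne10 : e1 ≠ e0 := fun h => he0q (h ▸ he1q)
      have hsub : (Finset.univ.filter (fun q' : Fin (ℓ+1) × Fin n => ρ q' = some true)) ⊆
          Finset.univ.image (fun j : Fin (ℓ+1) => (j, qs.2)) := by
        intro q' hq'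
        have hq'true : ρ q' = some true := (Finset.mem_filter.1 hq').2
        have hq'2 : q'.2 = qs.2 := by
          by_contra hne'
          have hq'cov : ∀ e ∈ E, q'.2 ∈ e := by
            intro e he
            have := ((mem_liveE ℓ G).1 he).2 q' true hq'true
            exact of_decide_eq_true this.symm
          have h1 : e1 = s(qs.2, q'.2) :=
            (Sym2.mem_and_mem_iff (Ne.symm hne')).1 ⟨hucov e1 he1E, hq'cov e1 he1E⟩
          have h0 : e0 = s(qs.2, q'.2) :=
            (Sym2.mem_and_mem_iff (Ne.symm hne')).1 ⟨hucov e0 he0E, hq'cov e0 he0E⟩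
          exact hne10 (h1.trans h0.symm)
        refine Finset.mem_image.2 ⟨q'.1, Finset.mem_univ _, ?_⟩
        exact Prod.ext rfl hq'2.symm
      calc tcount ℓ ρ ≤ (Finset.univ.image (fun j : Fin (ℓ+1) => (j, qs.2))).card :=
            Finset.card_le_card hsub
        _ ≤ (Finset.univ : Finset (Fin (ℓ+1))).card := Finset.card_image_le
        _ = ℓ + 1 := by simp
    have k3 : (ℓ+1) * (E.card + tau E) ≤ (ℓ+1) * (E.card + 1) :=
      Nat.mul_le_mul_left _ (by omega)
    have k4 : (ℓ+1) * (E0.card + 1) ≤ (ℓ+1) * (E0.card + tau E0) :=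
      Nat.mul_le_mul_left _ (by omega)
    have k5 : (ℓ+1) * (E1.card + 1) ≤ (ℓ+1) * (E1.card + tau E1) :=
      Nat.mul_le_mul_left _ (by omega)
    have k6 : (ℓ+1) * (E0.card + 1) + (ℓ+1) * (E1.card + 1) = (ℓ+1) * (E.card + 1) + (ℓ+1) := by
      rw [← hpart]
      ring
    have k7 : 2 * (ℓ+1) ≤ (ℓ+1) * (E0.card + 1) := by
      calc 2 * (ℓ+1) = (ℓ+1) * 2 := by ring
        _ ≤ (ℓ+1) * (E0.card + 1) := Nat.mul_le_mul_left _ (by omega)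
    have k8 : 2 * (ℓ+1) ≤ (ℓ+1) * (E1.card + 1) := by
      calc 2 * (ℓ+1) = (ℓ+1) * 2 := by ring
        _ ≤ (ℓ+1) * (E1.card + 1) := Nat.mul_le_mul_left _ (by omega)
    omega

lemma main_bound (T : DTree (Fin (ℓ+1) × Fin n)) :
    ∀ ρ : Fin (ℓ+1) × Fin n → Option Bool,
      (∀ x, Cons ℓ ρ x → T.eval x = ellIsEdge ℓ G x) → mu ℓ G ρ ≤ T.size := by
  induction T with
  | leaf b =>
    intro ρ h
    have hz : mu ℓ G ρ = 0 := mu_leaf ℓ G (fun x hx => (h x hx).symm)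
    rw [hz]
    exact Nat.zero_le _
  | node i l r ihl ihr =>
    intro ρ h
    cases hρi : ρ i with
    | some b =>
      cases b with
      | false =>
        have hl : ∀ x, Cons ℓ ρ x → l.eval x = ellIsEdge ℓ G x := by
          intro x hx
          have hxi : x i = false := hx i false hρi
          have := h x hx
          simp [DTree.eval, hxi] at this
          exact this
        have h1 := ihl ρ hl
        have h2 : l.size ≤ (DTree.node i l r).size := by rw [DTree.size]; omega
        omega
      | true =>
        have hr : ∀ x, Cons ℓ ρ x → r.eval x = ellIsEdge ℓ G x := by
          intro x hx
          have hxi : x i = true := hx i true hρi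
          have := h x hx
          simp [DTree.eval, hxi] at this
          exact this
        have h1 := ihr ρ hr
        have h2 : r.size ≤ (DTree.node i l r).size := by rw [DTree.size]; omega
        omega
    | none =>
      have hcons : ∀ (b : Bool) x, Cons ℓ (Function.update ρ i (some b)) x → Cons ℓ ρ x := by
        intro b x hx q' b' hq'
        have hne : q' ≠ i := by
          intro h'
          subst h'
          rw [hρi] at hq'
          cases hq'
        exact hx q' b' (by rw [Function.update_of_ne hne]; exact hq')
      have hl : ∀ x, Cons ℓ (Function.update ρ i (some false)) x →
          l.eval x = ellIsEdge ℓ G x := by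
        intro x hx
        have hxi : x i = false := hx i false (by rw [Function.update_self])
        have := h x (hcons false x hx)
        simp [DTree.eval, hxi] at this
        exact this
      have hr : ∀ x, Cons ℓ (Function.update ρ i (some true)) x →
          r.eval x = ellIsEdge ℓ G x := by
        intro x hx
        have hxi : x i = true := hx i true (by rw [Function.update_self])
        have := h x (hcons true x hx)
        simp [DTree.eval, hxi] at this
        exact this
      have hstep := mu_step ℓ G hρi
      have h1 := ihl _ hl
      have h2 := ihr _ hr
      rw [DTree.size]
      omega

end Stmt12

/-- if every vertex cover of G (m edges) has size at least k', then for any ℓ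
every decision tree computing ℓ-IsEdge_G has size at least (ℓ+1)(k'+m). -/
theorem stmt12 {n : ℕ} (G : SimpleGraph (Fin n)) [DecidableRel G.Adj] (ℓ k' : ℕ)
    (hk : ∀ C : Finset (Fin n), (∀ ⦃u v : Fin n⦄, G.Adj u v → u ∈ C ∨ v ∈ C) → k' ≤ C.card)
    (T : DTree (Fin (ℓ + 1) × Fin n)) (hT : ∀ x, T.eval x = ellIsEdge ℓ G x) :
    (ℓ + 1) * (k' + G.edgeFinset.card) ≤ T.size := by
  classical
  set ρ0 : Fin (ℓ+1) × Fin n → Option Bool := fun _ => none with hρ0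
  have hlive : Stmt12.liveE ℓ G ρ0 = G.edgeFinset := by
    unfold Stmt12.liveE
    apply Finset.filter_true_of_mem
    intro e _ q b hb
    simp [hρ0] at hb
  have htc : Stmt12.tcount ℓ ρ0 = 0 := by
    unfold Stmt12.tcount
    rw [Finset.filter_false_of_mem]
    · rfl
    · intro q _ hb
      simp [hρ0] at hb
  by_cases hGe : G.edgeFinset = ∅
  · have hk0 : k' = 0 := by
      have h0 := hk ∅ (fun u v hadj => by
        have : s(u, v) ∈ G.edgeFinset := SimpleGraph.mem_edgeFinset.2 (G.mem_edgeSet.2 hadj)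
        rw [hGe] at this
        exact absurd this (Finset.notMem_empty _))
      simpa using h0
    have hc0 : G.edgeFinset.card = 0 := by rw [hGe]; rfl
    rw [hk0, hc0]
    simp
  · have hne : (Stmt12.liveE ℓ G ρ0).Nonempty := by
      rw [hlive]
      exact Finset.nonempty_iff_ne_empty.2 hGe
    have hmu : Stmt12.mu ℓ G ρ0 = (ℓ+1) * (G.edgeFinset.card + Stmt12.tau G.edgeFinset) := by
      unfold Stmt12.mu
      rw [if_pos hne, hlive, htc, Nat.sub_zero]
    have hktau : k' ≤ Stmt12.tau G.edgeFinset := by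
      obtain ⟨C, hC, hCcard⟩ := Stmt12.exists_tau_cover G.edgeFinset
      rw [← hCcard]
      apply hk
      intro u v hadj
      have hmem : s(u, v) ∈ G.edgeFinset := SimpleGraph.mem_edgeFinset.2 (G.mem_edgeSet.2 hadj)
      obtain ⟨w, hwC, hwe⟩ := hC _ hmem
      rcases Sym2.mem_iff.1 hwe with rfl | rfl
      · exact Or.inl hwC
      · exact Or.inr hwC
    have hfinal := Stmt12.main_bound ℓ G T ρ0 (fun x _ => hT x)
    calc (ℓ + 1) * (k' + G.edgeFinset.card)
        ≤ (ℓ+1) * (G.edgeFinset.card + Stmt12.tau G.edgeFinset) :=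
          Nat.mul_le_mul_left _ (by omega)
      _ = Stmt12.mu ℓ G ρ0 := hmu.symm
      _ ≤ T.size := hfinal
end

section
/- Let G be a graph with m edges, ℓ ∈ ℕ, and suppose every vertex cover of G has size at least k'. Let ℓ-D_G consist of all generalized edge indicators ℓ-Ind[e] = (Ind[e], ..., Ind[e]) ∈ ({0,1}^n)^{ℓ+1}, all strings obtained from some ℓ-Ind[e] by flipping one of its 2ℓ+2 one-coordinates to zero, and the all-zeros string. Then every decision tree agreeing with ℓ-IsEdge_G on all points of ℓ-D_G has size at least (ℓ+1)(k'+m). -/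
open Classical

/-- The generalized edge indicator ℓ-Ind[e] = (Ind[e], ..., Ind[e]), encoded as a function on
Fin (ℓ+1) × Fin n. -/
noncomputable def ellInd {n : ℕ} (ℓ : ℕ) (e : Sym2 (Fin n)) :
    Fin (ℓ + 1) × Fin n → Bool :=
  fun p => decide (p.2 ∈ e)

/-- The coreset ℓ-D_G: generalized edge indicators, strings obtained by flipping one of the
2ℓ+2 one-coordinates of some ℓ-Ind[e] to zero, and the all-zeros string. -/
noncomputable def ellDG {n : ℕ} (ℓ : ℕ) (G : SimpleGraph (Fin n)) :
    Set (Fin (ℓ + 1) × Fin n → Bool) :=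
  {x | ∃ e ∈ G.edgeSet, x = ellInd ℓ e} ∪
  {x | ∃ e ∈ G.edgeSet, ∃ p : Fin (ℓ + 1) × Fin n, p.2 ∈ e ∧
        x = Function.update (ellInd ℓ e) p false} ∪
  {fun _ => false}

section KeyLemma

variable {n ℓ : ℕ}

private lemma sym2_eq {e : Sym2 (Fin n)} {a b : Fin n} (hab : a ≠ b) (ha : a ∈ e) (hb : b ∈ e) :
    e = s(a, b) := (Sym2.mem_and_mem_iff hab).1 ⟨ha, hb⟩

set_option maxHeartbeats 2000000 in
private lemma key (T : DTree (Fin (ℓ + 1) × Fin n)) :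
    ∀ (A : Finset (Sym2 (Fin n))) (F : Sym2 (Fin n) → Finset (Fin (ℓ + 1) × Fin n)),
    (∀ e ∈ A, ∀ p ∈ F e, p.2 ∈ e) →
    (∀ e ∈ A, T.eval (ellInd ℓ e) = true) →
    (∀ e ∈ A, ∀ p ∈ F e, T.eval (Function.update (ellInd ℓ e) p false) = false) →
    ∃ c : Sym2 (Fin n) → Fin n, ∃ rp : Fin n → Sym2 (Fin n),
      (∀ e ∈ A, c e ∈ e) ∧ (∀ i ∈ A.image c, rp i ∈ A ∧ c (rp i) = i) ∧
      ((∑ e ∈ A, ((F e).filter (fun p => p.2 ≠ c e)).card) +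
        ∑ i ∈ A.image c, ((F (rp i)).filter (fun p => p.2 = i)).card) ≤ T.size := by
  induction T with
  | leaf b =>
    intro A F hF h1 h0
    have hFe : ∀ e ∈ A, F e = ∅ := by
      intro e he
      by_contra hne
      obtain ⟨p, hp⟩ := Finset.nonempty_iff_ne_empty.2 hne
      have hb0 := h0 e he p hp
      have hb1 := h1 e he
      simp [DTree.eval] at hb0 hb1
      simp [hb1] at hb0
    refine ⟨fun e => e.out.1,
      fun i => if h : ∃ e, e ∈ A ∧ e.out.1 = i then h.choose else s(i, i),
      fun e _ => Sym2.out_fst_mem e, ?_, ?_⟩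
    · intro i hi
      obtain ⟨e, he, hce⟩ := Finset.mem_image.1 hi
      have h : ∃ e, e ∈ A ∧ e.out.1 = i := ⟨e, he, hce⟩
      simp only [dif_pos h]
      exact ⟨h.choose_spec.1, h.choose_spec.2⟩
    · have e1 : (∑ e ∈ A, ((F e).filter (fun p => p.2 ≠ e.out.1)).card) = 0 :=
        Finset.sum_eq_zero (fun e he => by rw [hFe e he]; simp)
      have e2 : (∑ i ∈ A.image (fun e => e.out.1),
          ((F ((fun i => if h : ∃ e, e ∈ A ∧ e.out.1 = i then h.choose else s(i, i)) i)).filter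
            (fun p => p.2 = i)).card) = 0 := by
        refine Finset.sum_eq_zero (fun i hi => ?_)
        obtain ⟨e, he, hce⟩ := Finset.mem_image.1 hi
        have h : ∃ e, e ∈ A ∧ e.out.1 = i := ⟨e, he, hce⟩
        simp only [dif_pos h]
        rw [hFe _ h.choose_spec.1]; simp
      simp only [e1, e2, DTree.size]
      exact le_refl 0
  | node q l r ihl ihr =>
    intro A F hF h1 h0
    set A1 := A.filter (fun e => q.2 ∈ e) with hA1def
    set A0 := A.filter (fun e => ¬ q.2 ∈ e) with hA0def
    have hmemA1 : ∀ e ∈ A1, e ∈ A ∧ q.2 ∈ e := fun e he => Finset.mem_filter.1 he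
    have hmemA0 : ∀ e ∈ A0, e ∈ A ∧ ¬ q.2 ∈ e := fun e he => Finset.mem_filter.1 he
    -- hypotheses for left subtree
    have h1l : ∀ e ∈ A0, l.eval (ellInd ℓ e) = true := by
      intro e he
      have hq := (hmemA0 e he).2
      have := h1 e (hmemA0 e he).1
      simpa [DTree.eval, ellInd, hq] using this
    have h0l : ∀ e ∈ A0, ∀ p ∈ F e, l.eval (Function.update (ellInd ℓ e) p false) = false := by
      intro e he p hp
      have hq := (hmemA0 e he).2
      have hval : Function.update (ellInd ℓ e) p false q = false := by
        rcases eq_or_ne q p with h | h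
        · subst h; simp
        · rw [Function.update_of_ne h]; simp [ellInd, hq]
      have := h0 e (hmemA0 e he).1 p hp
      simpa [DTree.eval, hval] using this
    -- hypotheses for right subtree
    have h1r : ∀ e ∈ A1, r.eval (ellInd ℓ e) = true := by
      intro e he
      have hq := (hmemA1 e he).2
      have := h1 e (hmemA1 e he).1
      simpa [DTree.eval, ellInd, hq] using this
    have h0r : ∀ e ∈ A1, ∀ p ∈ (F e).erase q,
        r.eval (Function.update (ellInd ℓ e) p false) = false := by
      intro e he p hp
      have hq := (hmemA1 e he).2
      have hpq : p ≠ q := (Finset.mem_erase.1 hp).1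
      have hval : Function.update (ellInd ℓ e) p false q = true := by
        rw [Function.update_of_ne (Ne.symm hpq)]; simp [ellInd, hq]
      have := h0 e (hmemA1 e he).1 p (Finset.mem_of_mem_erase hp)
      simpa [DTree.eval, hval] using this
    obtain ⟨c0, r0, hc0, hr0, hs0⟩ := ihl A0 F
      (fun e he p hp => hF e (hmemA0 e he).1 p hp) h1l h0l
    obtain ⟨c1, r1, hc1, hr1, hs1⟩ := ihr A1 (fun e => (F e).erase q)
      (fun e he p hp => hF e (hmemA1 e he).1 p (Finset.mem_of_mem_erase hp)) h1r h0r
    by_cases hA1 : A1.Nonempty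
    case neg =>
      -- A1 is empty, so A0 = A
      have hA1e : A1 = ∅ := Finset.not_nonempty_iff_eq_empty.1 hA1
      have hA0A : A0 = A := by
        ext e
        simp only [hA0def, Finset.mem_filter, and_iff_left_iff_imp]
        intro he hq
        have : e ∈ A1 := Finset.mem_filter.2 ⟨he, hq⟩
        simp [hA1e] at this
      rw [hA0A] at hc0 hr0 hs0
      exact ⟨c0, r0, hc0, hr0, le_trans hs0 (by simp [DTree.size]; omega)⟩
    case pos =>
      have hq2mem : ∀ e ∈ A1, q.2 ∈ e := fun e he => (hmemA1 e he).2
      have hA1pair : ∀ e ∈ A1, c1 e ≠ q.2 → e = s(q.2, c1 e) :=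
        fun e he hne => sym2_eq (Ne.symm hne) (hq2mem e he) (hc1 e he)
      set estar := if him : q.2 ∈ A1.image c1 then r1 q.2 else hA1.choose with hestardef
      have hestar1 : estar ∈ A1 := by
        rw [hestardef]; split_ifs with him
        · exact (hr1 q.2 him).1
        · exact hA1.choose_spec
      set c : Sym2 (Fin n) → Fin n := fun e => if q.2 ∈ e then q.2 else c0 e with hcdef
      set rp : Fin n → Sym2 (Fin n) := fun i => if i = q.2 then estar else r0 i with hrpdef
      have hceA1 : ∀ e ∈ A1, c e = q.2 := fun e he => by
        simp only [hcdef]; rw [if_pos (hq2mem e he)]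
      have hceA0 : ∀ e ∈ A0, c e = c0 e := fun e he => by
        simp only [hcdef]; rw [if_neg (hmemA0 e he).2]
      have hcmem : ∀ e ∈ A, c e ∈ e := by
        intro e he
        by_cases h : q.2 ∈ e
        · simp only [hcdef]; rw [if_pos h]; exact h
        · simp only [hcdef]; rw [if_neg h]; exact hc0 e (Finset.mem_filter.2 ⟨he, h⟩)
      have hq2notim0 : q.2 ∉ A0.image c0 := by
        intro h
        obtain ⟨e, he, hce⟩ := Finset.mem_image.1 h
        exact (hmemA0 e he).2 (hce ▸ hc0 e he)
      have himage : A.image c = insert q.2 (A0.image c0) := by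
        ext i
        simp only [Finset.mem_image, Finset.mem_insert]
        constructor
        · rintro ⟨e, he, rfl⟩
          by_cases h : q.2 ∈ e
          · left; simp only [hcdef]; rw [if_pos h]
          · right
            exact ⟨e, Finset.mem_filter.2 ⟨he, h⟩, by simp only [hcdef]; rw [if_neg h]⟩
        · rintro (rfl | ⟨e, he, rfl⟩)
          · obtain ⟨e, he⟩ := hA1
            exact ⟨e, (hmemA1 e he).1, hceA1 e he⟩
          · exact ⟨e, (hmemA0 e he).1, hceA0 e he⟩
      have hrpmem : ∀ i ∈ A.image c, rp i ∈ A ∧ c (rp i) = i := by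
        intro i hi
        rw [himage] at hi
        rcases Finset.mem_insert.1 hi with rfl | hi0
        · have h1' : rp q.2 = estar := by simp [hrpdef]
          exact ⟨h1' ▸ (hmemA1 estar hestar1).1, h1' ▸ hceA1 estar hestar1⟩
        · have hiq : i ≠ q.2 := by rintro rfl; exact hq2notim0 hi0
          have h1' : rp i = r0 i := by simp only [hrpdef]; rw [if_neg hiq]
          obtain ⟨hrA0, hcr⟩ := hr0 i hi0
          exact ⟨h1' ▸ (hmemA0 _ hrA0).1, by rw [h1', hceA0 _ hrA0, hcr]⟩
      refine ⟨c, rp, hcmem, hrpmem, ?_⟩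
      set A1q := A1.filter (fun e => c1 e = q.2) with hA1qdef
      set A1b := A1.filter (fun e => ¬ c1 e = q.2) with hA1bdef
      -- split the first sum over A = A1 ∪ A0
      have hAsplit : ∑ e ∈ A, (Finset.filter (fun p => p.2 ≠ c e) (F e)).card
          = ∑ e ∈ A1, (Finset.filter (fun p => p.2 ≠ c e) (F e)).card
            + ∑ e ∈ A0, (Finset.filter (fun p => p.2 ≠ c e) (F e)).card := by
        rw [hA1def, hA0def, Finset.sum_filter_add_sum_filter_not]
      have hA0sum : ∑ e ∈ A0, (Finset.filter (fun p => p.2 ≠ c e) (F e)).card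
          = ∑ e ∈ A0, (Finset.filter (fun p => p.2 ≠ c0 e) (F e)).card :=
        Finset.sum_congr rfl (fun e he => by rw [hceA0 e he])
      -- rewrite the A1 part
      have hA1sum0 : ∑ e ∈ A1, (Finset.filter (fun p => p.2 ≠ c e) (F e)).card
          = ∑ e ∈ A1, (Finset.filter (fun p => p.2 ≠ q.2) (F e)).card :=
        Finset.sum_congr rfl (fun e he => by rw [hceA1 e he])
      have hA1split : ∑ e ∈ A1, (Finset.filter (fun p => p.2 ≠ q.2) (F e)).card
          = ∑ e ∈ A1q, (Finset.filter (fun p => p.2 ≠ q.2) (F e)).card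
            + ∑ e ∈ A1b, (Finset.filter (fun p => p.2 ≠ q.2) (F e)).card := by
        rw [hA1qdef, hA1bdef, Finset.sum_filter_add_sum_filter_not]
      have hA1qsum : ∑ e ∈ A1q, (Finset.filter (fun p => p.2 ≠ q.2) (F e)).card
          = ∑ e ∈ A1q, (Finset.filter (fun p => p.2 ≠ c1 e) ((F e).erase q)).card := by
        refine Finset.sum_congr rfl (fun e he => ?_)
        have hcq : c1 e = q.2 := (Finset.mem_filter.1 he).2
        rw [hcq]
        congr 1
        ext p
        simp only [Finset.mem_filter, Finset.mem_erase]
        constructor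
        · rintro ⟨hp, hne⟩
          exact ⟨⟨fun h => hne (by rw [h]), hp⟩, hne⟩
        · rintro ⟨⟨_, hp⟩, hne⟩
          exact ⟨hp, hne⟩
      -- facts about A1b
      have hr1fact : ∀ e ∈ A1b, r1 (c1 e) = e := by
        intro e he
        obtain ⟨he1, hne⟩ := Finset.mem_filter.1 he
        have him : c1 e ∈ A1.image c1 := Finset.mem_image_of_mem _ he1
        obtain ⟨hrA, hcr⟩ := hr1 _ him
        have h1' : r1 (c1 e) = s(q.2, c1 e) := by
          have h2' := hA1pair _ hrA (by rw [hcr]; exact hne)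
          rwa [hcr] at h2'
        rw [h1', ← hA1pair e he1 hne]
      have hA1bterm : ∀ e ∈ A1b, (Finset.filter (fun p => p.2 ≠ q.2) (F e)).card
          = (Finset.filter (fun p => p.2 = c1 e) ((F (r1 (c1 e))).erase q)).card := by
        intro e he
        obtain ⟨he1, hne⟩ := Finset.mem_filter.1 he
        have heA : e ∈ A := (hmemA1 e he1).1
        have hpair := hA1pair e he1 hne
        rw [hr1fact e he]
        congr 1
        ext p
        simp only [Finset.mem_filter, Finset.mem_erase]
        constructor
        · rintro ⟨hp, hne2⟩
          have hpe : p.2 ∈ e := hF e heA p hp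
          have hp2 : p.2 = c1 e := by
            rw [hpair] at hpe
            rcases Sym2.mem_iff.1 hpe with h | h
            · exact absurd h hne2
            · exact h
          refine ⟨⟨fun hpq => hne ?_, hp⟩, hp2⟩
          rw [← hp2, hpq]
        · rintro ⟨⟨hpq, hp⟩, hp2⟩
          refine ⟨hp, ?_⟩
          rw [hp2]
          exact hne
      have hinj : ∀ e ∈ A1b, ∀ e' ∈ A1b, c1 e = c1 e' → e = e' := by
        intro e he e' he' hc
        rw [← hr1fact e he, ← hr1fact e' he', hc]
      have hA1bsum : ∑ e ∈ A1b, (Finset.filter (fun p => p.2 ≠ q.2) (F e)).card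
          = ∑ i ∈ A1b.image c1, (Finset.filter (fun p => p.2 = i) ((F (r1 i)).erase q)).card := by
        rw [Finset.sum_image hinj]
        exact Finset.sum_congr rfl hA1bterm
      -- the second sum
      have hrpq2 : rp q.2 = estar := by simp [hrpdef]
      have hImsum : ∑ i ∈ A.image c, (Finset.filter (fun p => p.2 = i) (F (rp i))).card
          = (Finset.filter (fun p => p.2 = q.2) (F estar)).card
            + ∑ i ∈ A0.image c0, (Finset.filter (fun p => p.2 = i) (F (r0 i))).card := by
        rw [himage, Finset.sum_insert hq2notim0, hrpq2]
        congr 1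
        refine Finset.sum_congr rfl (fun i hi => ?_)
        have hiq : i ≠ q.2 := by rintro rfl; exact hq2notim0 hi
        have h1' : rp i = r0 i := by simp only [hrpdef]; rw [if_neg hiq]
        rw [h1']
      -- bound the estar term
      have hestarbound : (Finset.filter (fun p => p.2 = q.2) (F estar)).card
          ≤ 1 + (Finset.filter (fun p => p.2 = q.2) ((F estar).erase q)).card := by
        have hsub : Finset.filter (fun p => p.2 = q.2) (F estar)
            ⊆ insert q (Finset.filter (fun p => p.2 = q.2) ((F estar).erase q)) := by
          intro p hp
          obtain ⟨hp1, hp2⟩ := Finset.mem_filter.1 hp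
          rcases eq_or_ne p q with rfl | h
          · exact Finset.mem_insert_self _ _
          · exact Finset.mem_insert_of_mem
              (Finset.mem_filter.2 ⟨Finset.mem_erase.2 ⟨h, hp1⟩, hp2⟩)
        calc (Finset.filter (fun p => p.2 = q.2) (F estar)).card
            ≤ (insert q (Finset.filter (fun p => p.2 = q.2) ((F estar).erase q))).card :=
              Finset.card_le_card hsub
          _ ≤ (Finset.filter (fun p => p.2 = q.2) ((F estar).erase q)).card + 1 :=
              Finset.card_insert_le _ _
          _ = 1 + _ := by omega
      have hA1qsub : ∑ e ∈ A1q, (Finset.filter (fun p => p.2 ≠ c1 e) ((F e).erase q)).card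
          ≤ ∑ e ∈ A1, (Finset.filter (fun p => p.2 ≠ c1 e) ((F e).erase q)).card := by
        rw [hA1qdef]
        exact Finset.sum_le_sum_of_subset (Finset.filter_subset _ _)
      have hsizeeq : (DTree.node q l r).size = 1 + l.size + r.size := rfl
      rw [hsizeeq]
      by_cases him : q.2 ∈ A1.image c1
      · -- estar is the representative r1 q.2
        have hestar_eq : estar = r1 q.2 := by rw [hestardef, dif_pos him]
        have hq2notimb : q.2 ∉ A1b.image c1 := by
          intro h
          obtain ⟨e, he, hce⟩ := Finset.mem_image.1 h
          exact (Finset.mem_filter.1 he).2 hce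
        have hsub2 : insert q.2 (A1b.image c1) ⊆ A1.image c1 := by
          intro i hi
          rcases Finset.mem_insert.1 hi with rfl | hi2
          · exact him
          · exact Finset.image_subset_image (Finset.filter_subset _ _) hi2
        have hK : (Finset.filter (fun p => p.2 = q.2) ((F (r1 q.2)).erase q)).card
            + ∑ i ∈ A1b.image c1, (Finset.filter (fun p => p.2 = i) ((F (r1 i)).erase q)).card
            ≤ ∑ i ∈ A1.image c1, (Finset.filter (fun p => p.2 = i) ((F (r1 i)).erase q)).card := by
          rw [← Finset.sum_insert
            (f := fun i => (Finset.filter (fun p => p.2 = i) ((F (r1 i)).erase q)).card)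
            hq2notimb]
          exact Finset.sum_le_sum_of_subset hsub2
        have hterm : (Finset.filter (fun p => p.2 = q.2) (F estar)).card
            ≤ 1 + (Finset.filter (fun p => p.2 = q.2) ((F (r1 q.2)).erase q)).card := by
          rw [← hestar_eq]
          exact hestarbound
        linarith [hAsplit, hA0sum, hA1sum0, hA1split, hA1qsum, hA1bsum, hImsum, hK, hterm,
          hA1qsub, hs0, hs1]
      · -- estar is an arbitrary element of A1, with c1 estar ≠ q.2
        have hestar_eq : estar = hA1.choose := by rw [hestardef, dif_neg him]
        have hcestar : c1 estar ≠ q.2 := by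
          intro h
          exact him (h ▸ Finset.mem_image_of_mem _ hestar1)
        have hestarA1b : estar ∈ A1b := Finset.mem_filter.2 ⟨hestar1, hcestar⟩
        have hestA : estar ∈ A := (hmemA1 estar hestar1).1
        have hfeq : Finset.filter (fun p => p.2 = q.2) ((F estar).erase q)
            = Finset.filter (fun p => p.2 ≠ c1 estar) ((F estar).erase q) := by
          ext p
          simp only [Finset.mem_filter, Finset.mem_erase]
          constructor
          · rintro ⟨hp, hp2⟩
            refine ⟨hp, ?_⟩
            rw [hp2]
            exact fun h => hcestar h.symm
          · rintro ⟨hp, hne2⟩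
            refine ⟨hp, ?_⟩
            have hpe : p.2 ∈ estar := hF estar hestA p hp.2
            rw [hA1pair estar hestar1 hcestar] at hpe
            rcases Sym2.mem_iff.1 hpe with h | h
            · exact h
            · exact absurd h hne2
        have hterm : (Finset.filter (fun p => p.2 = q.2) (F estar)).card
            ≤ 1 + (Finset.filter (fun p => p.2 ≠ c1 estar) ((F estar).erase q)).card := by
          rw [← hfeq]
          exact hestarbound
        have hnotin : estar ∉ A1q := fun h => hcestar (Finset.mem_filter.1 h).2
        have hsub3 : insert estar A1q ⊆ A1 := by
          intro e he
          rcases Finset.mem_insert.1 he with rfl | he2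
          · exact hestar1
          · exact Finset.filter_subset _ _ he2
        have hS : (Finset.filter (fun p => p.2 ≠ c1 estar) ((F estar).erase q)).card
            + ∑ e ∈ A1q, (Finset.filter (fun p => p.2 ≠ c1 e) ((F e).erase q)).card
            ≤ ∑ e ∈ A1, (Finset.filter (fun p => p.2 ≠ c1 e) ((F e).erase q)).card := by
          rw [← Finset.sum_insert
            (f := fun e => (Finset.filter (fun p => p.2 ≠ c1 e) ((F e).erase q)).card)
            hnotin]
          exact Finset.sum_le_sum_of_subset hsub3
        have hgsub : ∑ i ∈ A1b.image c1, (Finset.filter (fun p => p.2 = i) ((F (r1 i)).erase q)).card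
            ≤ ∑ i ∈ A1.image c1, (Finset.filter (fun p => p.2 = i) ((F (r1 i)).erase q)).card :=
          Finset.sum_le_sum_of_subset (Finset.image_subset_image (Finset.filter_subset _ _))
        linarith [hAsplit, hA0sum, hA1sum0, hA1split, hA1qsum, hA1bsum, hImsum, hterm, hS,
          hgsub, hs0, hs1]


private lemma card_fiber (v : Fin n) :
    ((Finset.univ : Finset (Fin (ℓ + 1) × Fin n)).filter (fun p => p.2 = v)).card = ℓ + 1 := by
  have h : (Finset.univ : Finset (Fin (ℓ + 1) × Fin n)).filter (fun p => p.2 = v)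
      = (Finset.univ : Finset (Fin (ℓ + 1))).image (fun j => (j, v)) := by
    ext ⟨j, i⟩
    simp [Prod.ext_iff, eq_comm]
  rw [h, Finset.card_image_of_injective _ (fun a b hab => by simpa using congrArg Prod.fst hab)]
  simp

private lemma exists_two {G : SimpleGraph (Fin n)} {e : Sym2 (Fin n)} (he : e ∈ G.edgeSet) :
    ∃ u v : Fin n, u ≠ v ∧ e = s(u, v) := by
  induction e using Sym2.ind with
  | _ a b => exact ⟨a, b, G.ne_of_adj ((SimpleGraph.mem_edgeSet G).1 he), rfl⟩

private lemma card_side {u v : Fin n} (huv : u ≠ v) :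
    (((Finset.univ : Finset (Fin (ℓ + 1) × Fin n)).filter (fun p => p.2 ∈ s(u, v))).filter
      (fun p => p.2 ≠ u)).card = ℓ + 1 := by
  have h : (((Finset.univ : Finset (Fin (ℓ + 1) × Fin n)).filter
        (fun p => p.2 ∈ s(u, v))).filter (fun p => p.2 ≠ u))
      = (Finset.univ : Finset (Fin (ℓ + 1) × Fin n)).filter (fun p => p.2 = v) := by
    ext p
    simp only [Finset.mem_filter, Finset.mem_univ, true_and, Sym2.mem_iff]
    constructor
    · rintro ⟨h1 | h1, h2⟩
      · exact absurd h1 h2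
      · exact h1
    · intro h1
      refine ⟨Or.inr h1, ?_⟩
      rw [h1]
      exact Ne.symm huv
  rw [h, card_fiber]

private lemma isEdge_ind {G : SimpleGraph (Fin n)} {e : Sym2 (Fin n)} (he : e ∈ G.edgeSet) :
    ellIsEdge ℓ G (ellInd ℓ e) = true := by
  simp only [ellIsEdge, decide_eq_true_eq]
  exact ⟨⟨e, he, funext fun i => rfl⟩, fun j i h => h⟩

private lemma isEdge_flip {G : SimpleGraph (Fin n)} {e : Sym2 (Fin n)} (he : e ∈ G.edgeSet)
    {p : Fin (ℓ + 1) × Fin n} (hp : p.2 ∈ e) :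
    ellIsEdge ℓ G (Function.update (ellInd ℓ e) p false) = false := by
  simp only [ellIsEdge, decide_eq_false_iff_not]
  rintro ⟨⟨e', he', hfun⟩, hmono⟩
  have hxp : Function.update (ellInd ℓ e) p false p = false := by simp
  by_cases hp1 : p.1 = 0
  · -- flip is in block 0
    have hpp : (0, p.2) = p := by rw [← hp1]
    obtain ⟨u, v, huv, rfl⟩ := exists_two he'
    have hu : Function.update (ellInd ℓ e) p false (0, u) = true := by
      rw [congrFun hfun u]; simp
    have hv : Function.update (ellInd ℓ e) p false (0, v) = true := by
      rw [congrFun hfun v]; simp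
    have hp2 : p.2 ∉ s(u, v) := by
      intro hmem
      have : Function.update (ellInd ℓ e) p false (0, p.2) = true := by
        rw [congrFun hfun p.2]; simpa using hmem
      rw [hpp] at this
      rw [this] at hxp
      simp at hxp
    have hup : u ≠ p.2 := fun h => hp2 (h ▸ Sym2.mem_mk_left u v)
    have hvp : v ≠ p.2 := fun h => hp2 (h ▸ Sym2.mem_mk_right u v)
    have hue : u ∈ e := by
      have hne : (0, u) ≠ p := fun h => hup (congrArg Prod.snd h)
      rw [Function.update_of_ne hne] at hu
      simpa [ellInd] using hu
    have hve : v ∈ e := by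
      have hne : (0, v) ≠ p := fun h => hvp (congrArg Prod.snd h)
      rw [Function.update_of_ne hne] at hv
      simpa [ellInd] using hv
    have : e = s(u, v) := sym2_eq huv hue hve
    exact hp2 (this ▸ hp)
  · -- flip is in a block j ≠ 0
    have h0 : (0, p.2) ≠ p := fun h => hp1 (congrArg Prod.fst h).symm
    have hx0 : Function.update (ellInd ℓ e) p false (0, p.2) = true := by
      rw [Function.update_of_ne h0]; simpa [ellInd] using hp
    have := hmono p.1 p.2 hx0
    rw [Prod.mk.eta] at this
    rw [this] at hxp
    simp at hxp

end KeyLemma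

/-- if every vertex cover of G (m edges) has size at least k', then every
decision tree agreeing with ℓ-IsEdge_G on all points of the coreset ℓ-D_G has size at least
(ℓ+1)(k'+m). -/
theorem stmt16 {n : ℕ} (G : SimpleGraph (Fin n)) [DecidableRel G.Adj] (ℓ k' : ℕ)
    (hk : ∀ C : Finset (Fin n), (∀ ⦃u v : Fin n⦄, G.Adj u v → u ∈ C ∨ v ∈ C) → k' ≤ C.card)
    (T : DTree (Fin (ℓ + 1) × Fin n))
    (hT : ∀ x ∈ ellDG ℓ G, T.eval x = ellIsEdge ℓ G x) :
    (ℓ + 1) * (k' + G.edgeFinset.card) ≤ T.size := by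
  classical
  set A := G.edgeFinset with hA
  set F : Sym2 (Fin n) → Finset (Fin (ℓ + 1) × Fin n) :=
    fun e => Finset.univ.filter (fun p => p.2 ∈ e) with hFdef
  have hFsub : ∀ e ∈ A, ∀ p ∈ F e, p.2 ∈ e := by
    intro e _ p hp
    simp only [hFdef] at hp
    exact (Finset.mem_filter.1 hp).2
  have h1 : ∀ e ∈ A, T.eval (ellInd ℓ e) = true := by
    intro e he
    have he' : e ∈ G.edgeSet := SimpleGraph.mem_edgeFinset.1 he
    have hmem : ellInd ℓ e ∈ ellDG ℓ G := Or.inl (Or.inl ⟨e, he', rfl⟩)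
    rw [hT _ hmem]
    exact isEdge_ind he'
  have h0 : ∀ e ∈ A, ∀ p ∈ F e, T.eval (Function.update (ellInd ℓ e) p false) = false := by
    intro e he p hp
    have he' : e ∈ G.edgeSet := SimpleGraph.mem_edgeFinset.1 he
    have hp2 : p.2 ∈ e := hFsub e he p hp
    have hmem : Function.update (ellInd ℓ e) p false ∈ ellDG ℓ G :=
      Or.inl (Or.inr ⟨e, he', p, hp2, rfl⟩)
    rw [hT _ hmem]
    exact isEdge_flip he' hp2
  obtain ⟨c, rp, hc, hrp, hsum⟩ := key T A F hFsub h1 h0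
  have hterm1 : ∀ e ∈ A, ((F e).filter (fun p => p.2 ≠ c e)).card = ℓ + 1 := by
    intro e he
    have he' : e ∈ G.edgeSet := SimpleGraph.mem_edgeFinset.1 he
    obtain ⟨u, v, huv, rfl⟩ := exists_two he'
    rcases Sym2.mem_iff.1 (hc _ he) with hcu | hcv
    · simp only [hFdef]
      rw [hcu]
      exact card_side huv
    · simp only [hFdef]
      rw [hcv, Sym2.eq_swap]
      exact card_side (Ne.symm huv)
  have hterm2 : ∀ i ∈ A.image c, ((F (rp i)).filter (fun p => p.2 = i)).card = ℓ + 1 := by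
    intro i hi
    obtain ⟨hrpA, hcrp⟩ := hrp i hi
    have hi_mem : i ∈ rp i := by
      have h' := hc _ hrpA
      rwa [hcrp] at h'
    have h : (F (rp i)).filter (fun p => p.2 = i)
        = (Finset.univ : Finset (Fin (ℓ + 1) × Fin n)).filter (fun p => p.2 = i) := by
      simp only [hFdef]
      ext p
      simp only [Finset.mem_filter, Finset.mem_univ, true_and]
      constructor
      · rintro ⟨_, h2⟩
        exact h2
      · intro h2
        exact ⟨by rw [h2]; exact hi_mem, h2⟩
    rw [h, card_fiber]
  have hsum1 : ∑ e ∈ A, ((F e).filter (fun p => p.2 ≠ c e)).card = A.card * (ℓ + 1) := by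
    rw [Finset.sum_congr rfl hterm1, Finset.sum_const, smul_eq_mul]
  have hsum2 : ∑ i ∈ A.image c, ((F (rp i)).filter (fun p => p.2 = i)).card
      = (A.image c).card * (ℓ + 1) := by
    rw [Finset.sum_congr rfl hterm2, Finset.sum_const, smul_eq_mul]
  have hcover : k' ≤ (A.image c).card := by
    refine hk _ ?_
    intro u v huv
    have he : s(u, v) ∈ A := SimpleGraph.mem_edgeFinset.2 ((SimpleGraph.mem_edgeSet G).2 huv)
    rcases Sym2.mem_iff.1 (hc _ he) with h | h
    · left
      rw [← h]
      exact Finset.mem_image_of_mem _ he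
    · right
      rw [← h]
      exact Finset.mem_image_of_mem _ he
  have h3 : k' * (ℓ + 1) ≤ (A.image c).card * (ℓ + 1) := Nat.mul_le_mul_right _ hcover
  have hgoal : (ℓ + 1) * (k' + A.card) = k' * (ℓ + 1) + A.card * (ℓ + 1) := by ring
  rw [hgoal]
  linarith [h3, hsum, hsum1.symm.le, hsum2.symm.le, hsum1.le]
end
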